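/- arXiv:2202.12038 — 6 statements merged into one kernel-verified Lean document; each statement's English description precedes it below -/
import Mathlib

section
/- Assume α ≥ 5, (s, σ, w, η, x, u) ∈ Δ, y ∈ Σ_k with y ≠ x, and (r, β) ∈ Π(s, σ, w, η, x, u, y). If r^β is a suffix of the word ηxuy, then there exists a prefix η̄ of η such that (s, σ, w, η̄, x, uy) ∈ Δ. -/
namespace PowerFreeFormalization

variable {A : Type*}

/-- `p` is the `β`-power `r^β` of the nonempty word `r`:
`|p| = β * |r|` and `p` is a prefix of `r r r ⋯`. -/
def IsPow (r p : List A) (β : ℚ) : Prop :=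
  r ≠ [] ∧ (p.length : ℚ) = β * r.length ∧
    p <+: (List.replicate p.length r).flatten

/-- A finite word `w` is `α`-power free: no factor of `w` is an `r^β` with `β ≥ α`. -/
def PowFree (α : ℚ) (w : List A) : Prop :=
  ∀ (r p : List A) (β : ℚ), α ≤ β → IsPow r p β → ¬ p <:+: w

/-- `p` is a finite factor of the right-infinite word `f : ℕ → A`, occurring at position `i`. -/
def OccursR (f : ℕ → A) (p : List A) (i : ℕ) : Prop :=
  p = (List.range p.length).map fun j => f (i + j)

/-- `p` is a finite factor of the right-infinite word `f`. -/
def FactorR (f : ℕ → A) (p : List A) : Prop :=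
  ∃ i : ℕ, OccursR f p i

/-- A left-infinite word is `g : ℕ → A`, where `g 0` is the rightmost letter,
`g 1` the one before it, etc.  `p` occurs in `g` ending at offset `i` from the
right end (offset `0` means `p` is a suffix). -/
def OccursL (g : ℕ → A) (p : List A) (i : ℕ) : Prop :=
  p.reverse = (List.range p.length).map fun j => g (i + j)

/-- `p` is a finite factor of the left-infinite word `g`. -/
def FactorL (g : ℕ → A) (p : List A) : Prop :=
  ∃ i : ℕ, OccursL g p i

/-- `p` is a suffix of the left-infinite word `g`. -/
def SuffixL (g : ℕ → A) (p : List A) : Prop :=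
  OccursL g p 0

/-- `p` is a finite factor of the bi-infinite word `h : ℤ → A`, at position `i`. -/
def OccursZ (h : ℤ → A) (p : List A) (i : ℤ) : Prop :=
  p = (List.range p.length).map fun j => h (i + j)

/-- `p` is a finite factor of the bi-infinite word `h`. -/
def FactorZ (h : ℤ → A) (p : List A) : Prop :=
  ∃ i : ℤ, OccursZ h p i

/-- A right-infinite word is `α`-power free iff all its finite factors are. -/
def PowFreeR (α : ℚ) (f : ℕ → A) : Prop :=
  ∀ p, FactorR f p → PowFree α p

/-- A left-infinite word is `α`-power free iff all its finite factors are. -/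
def PowFreeL (α : ℚ) (g : ℕ → A) : Prop :=
  ∀ p, FactorL g p → PowFree α p

/-- A bi-infinite word is `α`-power free iff all its finite factors are. -/
def PowFreeZ (α : ℚ) (h : ℤ → A) : Prop :=
  ∀ p, FactorZ h p → PowFree α p

/-- Appending a finite word `u` on the right end of a left-infinite word `g`,
yielding the left-infinite word `g u`. -/
def appendL (g : ℕ → A) (u : List A) : ℕ → A :=
  fun n => u.reverse.getD n (g (n - u.length))

/-- `p` is a recurrent factor of the right-infinite word `f`
(infinitely many occurrences). -/
def RecR (f : ℕ → A) (p : List A) : Prop :=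
  ∀ N : ℕ, ∃ i, N ≤ i ∧ OccursR f p i

/-- `p` is a recurrent factor of the left-infinite word `g`
(infinitely many occurrences). -/
def RecL (g : ℕ → A) (p : List A) : Prop :=
  ∀ N : ℕ, ∃ i, N ≤ i ∧ OccursL g p i

/-- `p` is a recurrent factor of the bi-infinite word `h`
(infinitely many occurrences). -/
def RecZ (h : ℤ → A) (p : List A) : Prop :=
  {i : ℤ | OccursZ h p i}.Infinite

/-- The bi-infinite word `g m f` obtained by concatenating a left-infinite word `g`,
a finite word `m` (starting at index `0`) and a right-infinite word `f`. -/
def biJoin (g : ℕ → A) (m : List A) (f : ℕ → A) : ℤ → A :=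
  fun i => if i < 0 then g (-(i + 1)).toNat
    else m.getD i.toNat (f (i.toNat - m.length))

/-- The set `Γ`:  triples `(w, η, u)` with `w` nonempty and, whenever `|u| ≤ |w|`,
`|η| ≥ (α+1)·α^(|w|-|u|)·|w|`. -/
def Gamma (α : ℚ) (w η u : List A) : Prop :=
  w ≠ [] ∧ (u.length ≤ w.length →
    (α + 1) * α ^ (w.length - u.length) * (w.length : ℚ) ≤ (η.length : ℚ))

/-- The set `Δ`: 6-tuples `(s, σ, w, η, x, u)` with `s` left-infinite, `w` nonempty,
such that `sσwηxu` is `α`-power free, `(w,η,u) ∈ Γ`, `w` occurs exactly once in `sσw`,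
and `x` is not a factor of `s` nor of `u`. -/
def Delta (α : ℚ) (s : ℕ → A) (σ w η : List A) (x : A) (u : List A) : Prop :=
  w ≠ [] ∧
  PowFreeL α (appendL s (σ ++ w ++ η ++ [x] ++ u)) ∧
  Gamma α w η u ∧
  (∃! i : ℕ, OccursL (appendL s (σ ++ w)) w i) ∧
  ¬ FactorL s [x] ∧ ¬ [x] <:+: u

/-- `(r, β) ∈ Π(s, σ, w, η, x, u, y)`:  `r` nonempty, `β > α` rational, `uy` is
`α`-power free and `r^β` is a suffix of the left-infinite word `sσwηxuy`. -/
def PiCond (α : ℚ) (s : ℕ → A) (σ w η : List A) (x : A) (u : List A) (y : A)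
    (r : List A) (β : ℚ) : Prop :=
  r ≠ [] ∧ α < β ∧ PowFree α (u ++ [y]) ∧
  ∃ p : List A, IsPow r p β ∧ SuffixL (appendL s (σ ++ w ++ η ++ [x] ++ u ++ [y])) p

lemma suffix_of_suffix_length_le' {l₁ l₂ l₃ : List A} (h1 : l₁ <:+ l₃) (h2 : l₂ <:+ l₃)
    (h : l₁.length ≤ l₂.length) : l₁ <:+ l₂ := by
  rw [← List.reverse_prefix] at h1 h2 ⊢
  exact List.prefix_of_prefix_length_le h1 h2 (by simpa using h)

lemma singleton_infix_of_mem {x : A} {l : List A} (h : x ∈ l) : [x] <:+: l := by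
  obtain ⟨s, t, rfl⟩ := List.append_of_mem h
  exact ⟨s, t, by simp⟩

lemma mem_of_getElem?_eq_some {l : List A} {n : ℕ} {a : A} (h : l[n]? = some a) : a ∈ l := by
  have hn : n < l.length := by
    by_contra hc
    rw [List.getElem?_eq_none (by omega)] at h
    cases h
  rw [List.getElem?_eq_getElem hn] at h
  have := List.getElem_mem hn
  rwa [Option.some_inj.mp h] at this

lemma pow_drop_eq_take {r p : List A} {β : ℚ} (h : IsPow r p β)
    (hm : r.length ≤ p.length) :
    p.drop r.length = p.take (p.length - r.length) := by
  obtain ⟨hr, hlen, hpre⟩ := h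
  rcases Nat.eq_zero_or_pos p.length with h0 | h0
  · rw [List.length_eq_zero_iff] at h0; subst h0; simp
  have hm1 : 1 ≤ r.length := List.length_pos_iff.mpr hr
  have hsplit : List.replicate p.length r = r :: List.replicate (p.length - 1) r := by
    conv_lhs => rw [show p.length = (p.length - 1) + 1 by omega]
    exact List.replicate_succ
  have hsplit' : List.replicate p.length r = List.replicate (p.length - 1) r ++ [r] := by
    conv_lhs => rw [show p.length = (p.length - 1) + 1 by omega]
    exact List.replicate_succ'
  have hR1 : (List.replicate p.length r).flatten
      = r ++ (List.replicate (p.length - 1) r).flatten := by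
    rw [hsplit]; simp
  have hR2 : (List.replicate p.length r).flatten
      = (List.replicate (p.length - 1) r).flatten ++ r := by
    rw [hsplit']; simp
  have hlenR' : (List.replicate (p.length - 1) r).flatten.length
      = (p.length - 1) * r.length := by
    simp [List.length_flatten, List.map_replicate, List.sum_replicate, smul_eq_mul]
  have hpt : p = (List.replicate p.length r).flatten.take p.length :=
    List.prefix_iff_eq_take.mp hpre
  have hle : p.length - r.length ≤ (List.replicate (p.length - 1) r).flatten.length := by
    rw [hlenR']
    have : p.length - 1 ≤ (p.length - 1) * r.length := Nat.le_mul_of_pos_right _ hm1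
    omega
  have e1 : p.drop r.length
      = (List.replicate (p.length - 1) r).flatten.take (p.length - r.length) := by
    conv_lhs => rw [hpt]
    rw [List.drop_take, hR1, List.drop_left]
  have e2 : p.take (p.length - r.length)
      = (List.replicate (p.length - 1) r).flatten.take (p.length - r.length) := by
    have h3 : p.take (p.length - r.length)
        = ((List.replicate p.length r).flatten.take p.length).take (p.length - r.length) := by
      rw [← hpt]
    rw [h3, List.take_take, min_eq_left (Nat.sub_le _ _), hR2,
      List.take_append_of_le_length hle]
  rw [e1, e2]

lemma appendL_append_eval (s : ℕ → A) (t c : List A) (n : ℕ) :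
    appendL s (t ++ c) (n + c.length) = appendL s t n := by
  unfold appendL
  rw [List.reverse_append, List.getD_append_right _ _ _ _ (by simp)]
  have e1 : n + c.length - c.reverse.length = n := by simp
  have e2 : n + c.length - (t ++ c).length = n - t.length := by simp; omega
  rw [e1, e2]

lemma powFreeL_of_prefix {α : ℚ} {s : ℕ → A} {t c : List A}
    (h : PowFreeL α (appendL s (t ++ c))) : PowFreeL α (appendL s t) := by
  intro q hq
  apply h q
  obtain ⟨i, hi⟩ := hq
  refine ⟨i + c.length, ?_⟩
  unfold OccursL at hi ⊢
  rw [hi]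
  apply List.map_congr_left
  intro j hj
  show appendL s t (i + j) = appendL s (t ++ c) (i + c.length + j)
  have e : i + c.length + j = (i + j) + c.length := by omega
  rw [e, appendL_append_eval]

/-- Proposition: if `(s,σ,w,η,x,u) ∈ Δ`, `y ≠ x`,
`(r,β) ∈ Π(s,σ,w,η,x,u,y)` and `r^β` is a suffix of `ηxuy`, then there is a prefix
`η̄` of `η` with `(s,σ,w,η̄,x,uy) ∈ Δ`. -/
theorem statement4 (k : ℕ) (hk : 3 ≤ k) (α : ℚ) (hα : 5 ≤ α)
    (s : ℕ → Fin k) (σ w η u : List (Fin k)) (x y : Fin k)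
    (r : List (Fin k)) (β : ℚ)
    (hΔ : Delta α s σ w η x u) (hyx : y ≠ x)
    (hPi : PiCond α s σ w η x u y r β)
    (hsuf : ∃ p : List (Fin k), IsPow r p β ∧ p <:+ (η ++ [x] ++ u ++ [y])) :
    ∃ η' : List (Fin k), η' <+: η ∧ Delta α s σ w η' x (u ++ [y]) := by
  obtain ⟨p, hpow, hpsuf⟩ := hsuf
  obtain ⟨hwne, hPF, hΓ, huniq, hxs, hxu⟩ := hΔ
  obtain ⟨hrne, hαβ, hPFuy, -⟩ := hPi
  obtain ⟨-, hlen, hpre⟩ := hpow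
  have hm1 : 1 ≤ r.length := List.length_pos_iff.mpr hrne
  have h5β : (5:ℚ) < β := lt_of_le_of_lt hα hαβ
  have h5m : 5 * r.length < p.length := by
    have h1 : (5:ℚ) * r.length < β * r.length := by
      apply mul_lt_mul_of_pos_right h5β
      exact_mod_cast hm1
    rw [← hlen] at h1
    exact_mod_cast h1
  have hxuyW : [x] ++ (u ++ [y]) <:+ η ++ [x] ++ u ++ [y] := ⟨η, by simp⟩
  have hnL : u.length + 2 ≤ p.length := by
    by_contra hcon
    push_neg at hcon
    have huyW : u ++ [y] <:+ η ++ [x] ++ u ++ [y] := ⟨η ++ [x], by simp⟩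
    have hpsuf2 : p <:+ u ++ [y] :=
      suffix_of_suffix_length_le' hpsuf huyW (by simp; omega)
    exact hPFuy r p β (le_of_lt hαβ) ⟨hrne, hlen, hpre⟩ hpsuf2.isInfix
  have hxuyp : [x] ++ (u ++ [y]) <:+ p :=
    suffix_of_suffix_length_le' hxuyW hpsuf (by simp; omega)
  obtain ⟨c, hc⟩ := hxuyp
  have hclen : c.length = p.length - (u.length + 2) := by
    have := congrArg List.length hc
    simp at this
    omega
  have hcη : c <:+ η := by
    obtain ⟨a, ha⟩ := hpsuf
    refine ⟨a, ?_⟩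
    refine List.append_cancel_right (bs := [x] ++ (u ++ [y])) ?_
    rw [List.append_assoc, hc, ha]
    simp
  have hper : p.drop r.length = p.take (p.length - r.length) :=
    pow_drop_eq_take ⟨hrne, hlen, hpre⟩ (by omega)
  have hgE : ∀ j, j < p.length - r.length → p[r.length + j]? = p[j]? := by
    intro j hj
    have h1 : (p.drop r.length)[j]? = p[r.length + j]? := List.getElem?_drop
    have h2 : (p.take (p.length - r.length))[j]? = p[j]? := by
      rw [List.getElem?_take, if_pos hj]
    rw [← h1, ← h2, hper]
  have hmL : u.length + 2 ≤ r.length := by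
    by_contra hcon
    push_neg at hcon
    have hj : c.length < p.length - r.length := by omega
    have hx1 : p[c.length]? = some x := by
      rw [← hc, List.getElem?_append_right (le_refl _)]
      simp
    have hx3 : ([x] ++ (u ++ [y]))[r.length]? = some x := by
      have he : p[r.length + c.length]? = ([x] ++ (u ++ [y]))[r.length]? := by
        rw [← hc, Nat.add_comm, List.getElem?_append_right (by omega)]
        congr 1
        omega
      rw [← he, hgE _ hj, hx1]
    have hx4 : (u ++ [y])[r.length - 1]? = some x := by
      rw [List.getElem?_append_right (l₁ := [x]) (by simp; omega)] at hx3
      simpa using hx3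
    rcases Nat.lt_or_ge (r.length - 1) u.length with h | h
    · have h6 : (u ++ [y])[r.length - 1]? = u[r.length - 1]? := by
        rw [List.getElem?_append, if_pos h]
      have h5 : u[r.length - 1]? = some x := by rw [← h6]; exact hx4
      exact hxu (singleton_infix_of_mem (mem_of_getElem?_eq_some h5))
    · have hr1 : r.length - 1 = u.length := by omega
      rw [hr1, List.getElem?_append_right (le_refl _)] at hx4
      simp at hx4
      exact hyx hx4
  -- second occurrence of x u y inside c
  have hxuyp' : [x] ++ (u ++ [y]) <:+ p := ⟨c, hc⟩
  have hlendrop : ([x] ++ (u ++ [y])).length ≤ (p.drop r.length).length := by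
    simp only [List.length_append, List.length_drop, List.length_cons, List.length_nil]
    omega
  have hxuy_dropm : [x] ++ (u ++ [y]) <:+ p.drop r.length :=
    suffix_of_suffix_length_le' hxuyp' (List.drop_suffix r.length p) hlendrop
  rw [hper] at hxuy_dropm
  have htake : ∀ nn, nn ≤ c.length → p.take nn = c.take nn := by
    intro nn hnn
    rw [← hc, List.take_append_of_le_length hnn]
  rw [htake _ (by omega)] at hxuy_dropm
  obtain ⟨η₁, hη₁⟩ := hxuy_dropm
  have hcdecomp : c = η₁ ++ ([x] ++ (u ++ [y])) ++ c.drop (p.length - r.length) := by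
    conv_lhs => rw [← List.take_append_drop (p.length - r.length) c]
    rw [← hη₁]
  obtain ⟨ηpre, hηpre⟩ := hcη
  have hηeq : η = (ηpre ++ η₁) ++ ([x] ++ (u ++ [y])) ++ c.drop (p.length - r.length) := by
    rw [← hηpre]
    conv_lhs => rw [hcdecomp]
    simp [List.append_assoc]
  have hBlen : (c.drop (p.length - r.length)).length = r.length - (u.length + 2) := by
    simp
    omega
  have hηlen : η.length = ηpre.length + η₁.length + r.length := by
    have h1 := congrArg List.length hηeq
    simp only [List.length_append, List.length_cons, List.length_nil] at h1
    rw [hBlen] at h1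
    omega
  have hnW : p.length ≤ η.length + u.length + 2 := by
    have := hpsuf.length_le
    simp at this
    omega
  refine ⟨ηpre ++ η₁, ⟨([x] ++ (u ++ [y])) ++ c.drop (p.length - r.length), by
    rw [hηeq]; simp [List.append_assoc]⟩, ?_, ?_, ?_, ?_, ?_, ?_⟩
  · exact hwne
  · -- PowFreeL
    have hkey : σ ++ w ++ η ++ [x] ++ u
        = (σ ++ w ++ (ηpre ++ η₁) ++ [x] ++ (u ++ [y]))
          ++ (c.drop (p.length - r.length) ++ [x] ++ u) := by
      rw [hηeq]
      simp [List.append_assoc]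
    rw [hkey] at hPF
    exact powFreeL_of_prefix hPF
  · -- Gamma
    refine ⟨hwne, ?_⟩
    intro hle
    simp only [List.length_append, List.length_cons, List.length_nil, Nat.zero_add,
      Nat.add_zero, zero_add, add_zero] at hle ⊢
    have hle' : u.length ≤ w.length := by omega
    have hΓ2 := hΓ.2 hle'
    have hd : w.length - u.length = (w.length - (u.length + 1)) + 1 := by omega
    rw [hd, pow_succ] at hΓ2
    have hm4 : 4 * r.length < η.length := by omega
    have hηq : (η.length : ℚ) = (ηpre.length : ℚ) + η₁.length + r.length := by
      exact_mod_cast hηlen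
    have h0α : (0:ℚ) ≤ α := by linarith
    have hE0 : (0:ℚ) ≤ (α + 1) * α ^ (w.length - (u.length + 1)) * w.length := by
      apply mul_nonneg (mul_nonneg (by linarith) (pow_nonneg h0α _))
      exact Nat.cast_nonneg _
    have hm4q : 4 * (r.length : ℚ) < η.length := by exact_mod_cast hm4
    have hmq : (0:ℚ) ≤ r.length := Nat.cast_nonneg _
    push_cast
    nlinarith [hΓ2, hE0, hm4q, mul_nonneg hE0 (show (0:ℚ) ≤ α - 5 by linarith)]
  · exact huniq
  · exact hxs
  · intro hinf
    have hxmem : x ∈ u ++ [y] := hinf.subset (by simp)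
    rcases List.mem_append.mp hxmem with h | h
    · exact hxu (singleton_infix_of_mem h)
    · simp at h
      exact hyx h.symm

end PowerFreeFormalization
end

section
/- Assume α ≥ 5, (s, σ, w, η, x, u) ∈ Δ, y ∈ Σ_k with y ≠ x, and (r, β) ∈ Π(s, σ, w, η, x, u, y). If |r| ≤ |w| and |u| ≤ |w|, then r^β is a suffix of the word ηxuy. -/
namespace PowerFreeFormalization

variable {A : Type*}

lemma appendL_succ (s : ℕ → A) (L : List A) (a : A) (n : ℕ) :
    appendL s (L ++ [a]) (n + 1) = appendL s L n := by
  simp [appendL, List.getD_cons_succ, Nat.succ_sub_succ]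

lemma suffixL_of_suffix (s : ℕ → A) {M L : List A} (h : M <:+ L) :
    SuffixL (appendL s L) M := by
  have hpre : M.reverse <+: L.reverse := List.reverse_prefix.mpr h
  have hlen : M.length ≤ L.length := h.length_le
  unfold SuffixL OccursL
  apply List.ext_getElem (by simp)
  intro i h1 h2
  have hi : i < M.reverse.length := h1
  have hiL : i < L.reverse.length := by simp at hi ⊢; omega
  simp only [List.getElem_map, List.getElem_range, Nat.zero_add, appendL]
  rw [List.getD_eq_getElem _ _ hiL]
  exact hpre.getElem hi

/-- Lemma: if `(s,σ,w,η,x,u) ∈ Δ`, `y ≠ x`,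
`(r,β) ∈ Π(s,σ,w,η,x,u,y)`, `|r| ≤ |w|` and `|u| ≤ |w|`, then `r^β` is a suffix
of `ηxuy`. -/
theorem statement5 (k : ℕ) (hk : 3 ≤ k) (α : ℚ) (hα : 5 ≤ α)
    (s : ℕ → Fin k) (σ w η u : List (Fin k)) (x y : Fin k)
    (r : List (Fin k)) (β : ℚ)
    (hΔ : Delta α s σ w η x u) (hyx : y ≠ x)
    (hPi : PiCond α s σ w η x u y r β)
    (hr : r.length ≤ w.length) (hu : u.length ≤ w.length) :
    ∃ p : List (Fin k), IsPow r p β ∧ p <:+ (η ++ [x] ++ u ++ [y]) := by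
  obtain ⟨hw, hpfree, ⟨-, hΓ⟩, -, -, -⟩ := hΔ
  obtain ⟨hrne, hαβ, -, p, hpow, hsuf⟩ := hPi
  obtain ⟨-, hplen, hppre⟩ := hpow
  refine ⟨p, ⟨hrne, hplen, hppre⟩, ?_⟩
  have hrpos : 0 < r.length := List.length_pos_iff.mpr hrne
  have hrQ : (1 : ℚ) ≤ (r.length : ℚ) := by exact_mod_cast hrpos
  have hwpos : 0 < w.length := List.length_pos_iff.mpr hw
  have hwQ : (1 : ℚ) ≤ (w.length : ℚ) := by exact_mod_cast hwpos
  have hβpos : (0 : ℚ) < β := by linarith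
  have hppos : p ≠ [] := by
    intro h
    rw [h] at hplen
    simp at hplen
    rcases hplen with h | h
    · linarith
    · exact hrne h
  -- the word without the last letter
  set p' := p.dropLast with hp'def
  have hlast := List.dropLast_concat_getLast hppos
  have hn : p.length = p'.length + 1 := by
    have h0 : 0 < p.length := List.length_pos_iff.mpr hppos
    have h1 : p'.length = p.length - 1 := List.length_dropLast
    omega
  -- p' is a suffix of sσwηxu
  have hassoc : σ ++ w ++ η ++ [x] ++ u ++ [y] = (σ ++ w ++ η ++ [x] ++ u) ++ [y] := by
    simp [List.append_assoc]
  have hrev : p.reverse = p.getLast hppos :: p'.reverse := by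
    conv_lhs => rw [← hlast]
    simp [hp'def]
  have hsufval : ∀ i, i < p.length →
      p.reverse.getD i (p.getLast hppos)
        = appendL s (σ ++ w ++ η ++ [x] ++ u ++ [y]) i := by
    intro i hi
    rw [show p.reverse = _ from hsuf, List.getD_eq_getElem _ _ (by simpa using hi)]
    simp
  have hsuf' : SuffixL (appendL s (σ ++ w ++ η ++ [x] ++ u)) p' := by
    unfold SuffixL OccursL
    apply List.ext_getElem (by simp)
    intro i h1 h2
    have hi1 : i + 1 < p.length := by simp [hn] at h1 ⊢; omega
    have hv := hsufval (i + 1) hi1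
    rw [hrev, List.getD_cons_succ] at hv
    rw [List.getD_eq_getElem _ _ (by simpa using h1)] at hv
    rw [hassoc, appendL_succ] at hv
    simpa using hv
  -- p' is an r-power with exponent |p'|/|r|
  have hflatlen : ∀ n : ℕ, (List.replicate n r).flatten.length = n * r.length := by
    intro n
    simp [List.length_flatten, List.map_replicate, List.sum_replicate, smul_eq_mul]
  have hppre' : p' <+: (List.replicate p'.length r).flatten := by
    have h3 : p' <+: (List.replicate p.length r).flatten :=
      (List.dropLast_prefix p).trans hppre
    have h4 : (List.replicate p'.length r).flatten <+: (List.replicate p.length r).flatten := by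
      refine ⟨(List.replicate (p.length - p'.length) r).flatten, ?_⟩
      rw [← List.flatten_append, ← List.replicate_add,
        show p'.length + (p.length - p'.length) = p.length by omega]
    refine List.prefix_of_prefix_length_le h3 h4 ?_
    rw [hflatlen]
    exact Nat.le_mul_of_pos_right _ hrpos
  have hpow' : IsPow r p' ((p'.length : ℚ) / (r.length : ℚ)) :=
    ⟨hrne, by field_simp, hppre'⟩
  -- p' is α-power free since it is a factor of sσwηxu
  have hβ' : (p'.length : ℚ) / (r.length : ℚ) < α := by
    by_contra hcon
    push_neg at hcon
    exact hpfree p' ⟨0, hsuf'⟩ r p' _ hcon hpow' (List.infix_refl p')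
  -- length bound
  have hηlen : (α + 1) * α ^ (w.length - u.length) * (w.length : ℚ) ≤ (η.length : ℚ) :=
    hΓ hu
  have hpowge : (1 : ℚ) ≤ α ^ (w.length - u.length) := one_le_pow₀ (by linarith)
  have hηge : α * (w.length : ℚ) + 1 ≤ (η.length : ℚ) := by
    have h1 : (α + 1) * 1 * (w.length : ℚ) ≤ (α + 1) * α ^ (w.length - u.length) * (w.length : ℚ) := by
      apply mul_le_mul_of_nonneg_right _ (by positivity)
      apply mul_le_mul_of_nonneg_left hpowge (by linarith)
    nlinarith
  have hp'lt : (p'.length : ℚ) < α * (r.length : ℚ) := by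
    rw [div_lt_iff₀ (by exact_mod_cast hrpos)] at hβ'
    linarith
  have hplen_le : (p.length : ℚ) < (η.length : ℚ) := by
    have h2 : (p.length : ℚ) = (p'.length : ℚ) + 1 := by exact_mod_cast hn
    have h3 : α * (r.length : ℚ) ≤ α * (w.length : ℚ) := by
      apply mul_le_mul_of_nonneg_left _ (by linarith)
      exact_mod_cast hr
    linarith
  have hplenN : p.length ≤ (η ++ [x] ++ u ++ [y]).length := by
    have : p.length < η.length := by exact_mod_cast hplen_le
    simp
    omega
  -- ηxuy is a suffix of the same left-infinite word; conclude
  have hsufM : SuffixL (appendL s (σ ++ w ++ η ++ [x] ++ u ++ [y])) (η ++ [x] ++ u ++ [y]) :=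
    suffixL_of_suffix s ⟨σ ++ w, by simp [List.append_assoc]⟩
  apply List.reverse_prefix.mp
  rw [show p.reverse = _ from hsuf, show (η ++ [x] ++ u ++ [y]).reverse = _ from hsufM]
  have htake : List.range p.length = (List.range (η ++ [x] ++ u ++ [y]).length).take p.length := by
    rw [List.take_range, min_eq_left]
    simpa using hplenN
  rw [htake]
  exact (List.take_prefix _ _).map _

end PowerFreeFormalization
end

section
/- Assume α ≥ 5, (s, σ, w, η, x, u) ∈ Δ, y ∈ Σ_k with y ≠ x, and (r, β) ∈ Π(s, σ, w, η, x, u, y). If r^β is not a suffix of the word ηxuy, then |r| > |w|. -/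
namespace PowerFreeFormalization

variable {A : Type*}

/-! ### Auxiliary lemmas -/

lemma length_flatten_replicate (n : ℕ) (l : List A) :
    ((List.replicate n l).flatten).length = n * l.length := by
  simp [List.length_flatten, List.map_replicate, List.sum_replicate, smul_eq_mul]

lemma flatten_replicate_prefix {m n : ℕ} (h : m ≤ n) (l : List A) :
    (List.replicate m l).flatten <+: (List.replicate n l).flatten := by
  have hrep : List.replicate n l = List.replicate m l ++ List.replicate (n - m) l := by
    rw [← List.replicate_add]; congr 1; omega
  rw [hrep, List.flatten_append]
  exact List.prefix_append _ _

lemma pow_period {r p : List A} {β : ℚ} (h : IsPow r p β) {i : ℕ}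
    (hi : i + r.length < p.length) : p[i]? = p[i + r.length]? := by
  obtain ⟨hr, -, hpre⟩ := h
  have hr1 : 1 ≤ r.length := List.length_pos_iff.mpr hr
  set q := (List.replicate p.length r).flatten with hq
  have hlq : q.length = p.length * r.length := length_flatten_replicate _ _
  obtain ⟨m, hm⟩ : ∃ m, p.length = m + 1 := ⟨p.length - 1, by omega⟩
  have hq' : q = r ++ (List.replicate m r).flatten := by
    rw [hq, hm, List.replicate_succ, List.flatten_cons]
  have hlq' : ((List.replicate m r).flatten).length = m * r.length :=
    length_flatten_replicate _ _
  have hmm : m ≤ m * r.length := Nat.le_mul_of_pos_right m (by omega)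
  have hpp : p.length ≤ p.length * r.length := Nat.le_mul_of_pos_right _ (by omega)
  have hi1 : i < p.length := by omega
  have e1 : p[i]? = q[i]? := by
    rw [List.getElem?_eq_getElem hi1, List.getElem?_eq_getElem (by omega : i < q.length)]
    exact congrArg some (hpre.getElem hi1)
  have e2 : p[i + r.length]? = q[i + r.length]? := by
    rw [List.getElem?_eq_getElem hi, List.getElem?_eq_getElem (by omega : i + r.length < q.length)]
    exact congrArg some (hpre.getElem hi)
  have e3 : q[i + r.length]? = ((List.replicate m r).flatten)[i]? := by
    rw [hq', List.getElem?_append_right (by omega : r.length ≤ i + r.length)]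
    congr 1; omega
  have hip : i < ((List.replicate m r).flatten).length := by omega
  have e4 : ((List.replicate m r).flatten)[i]? = q[i]? := by
    rw [List.getElem?_eq_getElem hip, List.getElem?_eq_getElem (by omega : i < q.length)]
    exact congrArg some ((flatten_replicate_prefix (by omega : m ≤ p.length) r).getElem hip)
  rw [e1, e2, e3, e4]

lemma occursL_getElem? {g : ℕ → A} {p : List A} {i j : ℕ} (h : OccursL g p i)
    (hj : j < p.length) : p.reverse[j]? = some (g (i + j)) := by
  rw [h, List.getElem?_map, List.getElem?_range hj, Option.map_some]

lemma appendL_eval {s : ℕ → A} {v : List A} {j : ℕ} (hj : j < v.length) :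
    appendL s v j = v.reverse[j]'(by simpa using hj) := by
  unfold appendL
  exact List.getD_eq_getElem _ _ (by simpa using hj)

lemma appendL_eval_right {s : ℕ → A} (a t : List A) {j : ℕ} (hj : j < t.length) :
    appendL s (a ++ t) j = t.reverse[j]'(by simpa using hj) := by
  rw [appendL_eval (by simp; omega)]
  have h1 : (a ++ t).reverse[j]? = t.reverse[j]? := by
    rw [List.reverse_append, List.getElem?_append, if_pos (by simpa using hj)]
  rw [List.getElem?_eq_getElem, List.getElem?_eq_getElem] at h1
  exact Option.some.inj h1
  all_goals (simp only [List.length_reverse, List.length_append, List.length_singleton]; omega)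

lemma appendL_concat_succ (s : ℕ → A) (v : List A) (a : A) (m : ℕ) :
    appendL s (v ++ [a]) (m + 1) = appendL s v m := by
  unfold appendL
  rw [show (v ++ [a]).reverse = a :: v.reverse from by simp]
  simp [Nat.succ_sub_succ]

lemma suffixL_suffix {s : ℕ → A} {v p : List A} (h : SuffixL (appendL s v) p)
    (hlen : p.length ≤ v.length) : p <:+ v := by
  rw [← List.reverse_prefix]
  have hrev : p.reverse = v.reverse.take p.length := by
    apply List.ext_getElem?
    intro n
    rcases lt_or_ge n p.length with hn | hn
    · rw [occursL_getElem? h hn, List.getElem?_take, if_pos hn, zero_add,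
        appendL_eval (by omega : n < v.length),
        List.getElem?_eq_getElem (by simpa using (by omega : n < v.length))]
    · rw [List.getElem?_eq_none (by simpa using hn), List.getElem?_take, if_neg (by omega)]
  rw [hrev]
  exact List.take_prefix _ _

/-- Lemma: if `(s,σ,w,η,x,u) ∈ Δ`, `y ≠ x`,
`(r,β) ∈ Π(s,σ,w,η,x,u,y)` and `r^β` is not a suffix of `ηxuy`, then `|r| > |w|`. -/
theorem statement6 (k : ℕ) (hk : 3 ≤ k) (α : ℚ) (hα : 5 ≤ α)
    (s : ℕ → Fin k) (σ w η u : List (Fin k)) (x y : Fin k)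
    (r : List (Fin k)) (β : ℚ)
    (hΔ : Delta α s σ w η x u) (hyx : y ≠ x)
    (hPi : PiCond α s σ w η x u y r β)
    (hnsuf : ¬ ∃ p : List (Fin k), IsPow r p β ∧ p <:+ (η ++ [x] ++ u ++ [y])) :
    w.length < r.length := by
  by_contra hcon
  push_neg at hcon
  obtain ⟨hw_ne, hpfree, hΓ, huniq, hxs, hxu⟩ := hΔ
  obtain ⟨hr_ne, hαβ, hufree, p, hpowp, hsufp⟩ := hPi
  have hr1 : 1 ≤ r.length := List.length_pos_iff.mpr hr_ne
  set v := σ ++ w ++ η ++ [x] ++ u ++ [y] with hv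
  have hlenv : v.length = σ.length + w.length + η.length + 1 + u.length + 1 := by
    simp [hv]; omega
  -- Fact 1 : p is longer than η x u y
  have hfact1 : η.length + u.length + 2 < p.length := by
    by_contra hle
    push_neg at hle
    refine hnsuf ⟨p, hpowp, ?_⟩
    have hpv : p <:+ v := suffixL_suffix hsufp (by omega)
    have hev : (η ++ [x] ++ u ++ [y]) <:+ v := ⟨σ ++ w, by simp [hv, List.append_assoc]⟩
    have h1 := List.reverse_prefix.mpr hpv
    have h2 := List.reverse_prefix.mpr hev
    exact List.reverse_prefix.mp
      (List.prefix_of_prefix_length_le h1 h2 (by simp; omega))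
  -- position of x from the right end
  have hveq2 : v = (σ ++ w ++ η) ++ ([x] ++ u ++ [y]) := by simp [hv, List.append_assoc]
  have hx_pos : appendL s v (u.length + 1) = x := by
    rw [hveq2, appendL_eval_right _ _ (by simp)]
    have h1 : ([x] ++ u ++ [y]).reverse[u.length + 1]? = some x := by
      rw [List.getElem?_reverse (by simp)]
      rw [show ([x] ++ u ++ [y]).length - 1 - (u.length + 1) = 0 from by simp]
      simp
    rw [List.getElem?_eq_getElem] at h1
    exact Option.some.inj h1
    simp only [List.length_reverse, List.length_append, List.length_singleton]; omega
  -- positions 0..|u| avoid x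
  have hveq1 : v = (σ ++ w ++ η ++ [x]) ++ (u ++ [y]) := by simp [hv, List.append_assoc]
  have hno_x : ∀ j, j ≤ u.length → appendL s v j ≠ x := by
    intro j hj
    rw [hveq1, appendL_eval_right _ _ (by simp; omega)]
    intro hEq
    have h1 : (u ++ [y]).reverse[j]? = some x := by
      rw [List.getElem?_eq_getElem]; exact congrArg some hEq; simp only [List.length_reverse, List.length_append, List.length_singleton]; omega
    rw [show (u ++ [y]).reverse = y :: u.reverse from by simp] at h1
    rcases j with _ | i
    · rw [List.getElem?_cons_zero] at h1
      exact hyx (Option.some.inj h1)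
    · rw [List.getElem?_cons_succ] at h1
      have hxm : x ∈ u := List.mem_reverse.mp (List.mem_of_getElem? h1)
      obtain ⟨s₁, t₁, rfl⟩ := List.append_of_mem hxm
      exact hxu ⟨s₁, t₁, by simp⟩
  -- periodicity of the suffix word
  have hperiod : ∀ j, j + r.length < p.length →
      appendL s v j = appendL s v (j + r.length) := by
    intro j hjr
    have h1 : p.reverse[j]? = some (appendL s v j) := by
      simpa using occursL_getElem? hsufp (by omega)
    have h2 : p.reverse[j + r.length]? = some (appendL s v (j + r.length)) := by
      simpa using occursL_getElem? hsufp hjr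
    rw [List.getElem?_reverse (by omega)] at h1
    rw [List.getElem?_reverse (by omega)] at h2
    have hper := pow_period hpowp (i := p.length - 1 - j - r.length)
      (by omega : p.length - 1 - j - r.length + r.length < p.length)
    rw [show p.length - 1 - (j + r.length) = p.length - 1 - j - r.length from by omega] at h2
    rw [hper, show p.length - 1 - j - r.length + r.length = p.length - 1 - j from by omega,
      h1] at h2
    exact Option.some.inj h2
  -- |r| ≥ |u| + 2
  have hfact5 : u.length + 2 ≤ r.length := by
    by_contra h5
    push_neg at h5
    have hj : (u.length + 1 - r.length) + r.length = u.length + 1 := by omega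
    have hper := hperiod (u.length + 1 - r.length) (by omega)
    rw [hj] at hper
    exact hno_x _ (by omega) (hper.trans hx_pos)
  -- Γ bound on |η|
  have hu_le : u.length ≤ w.length := by omega
  have h2Γ := hΓ.2 hu_le
  have hp1 : (1:ℚ) ≤ α ^ (w.length - u.length) := one_le_pow₀ (by linarith)
  have hwQ : (0:ℚ) ≤ (w.length : ℚ) := by positivity
  have hEta : (α + 1) * (w.length : ℚ) ≤ (η.length : ℚ) := by nlinarith
  -- the truncated power is a factor of the α-power-free word s σ w η x u
  have hm2 : u.length + 2 ≤ p.length := by omega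
  set m := p.length - (u.length + 2) with hmdef
  have hrQ : (0:ℚ) < (r.length : ℚ) := by exact_mod_cast hr1
  have hfact8 : (m : ℚ) < α * r.length := by
    by_contra h8
    push_neg at h8
    set p' := p.take m with hp'
    have hlp' : p'.length = m := by rw [hp', List.length_take]; omega
    have hppre : p' <+: p := List.take_prefix _ _
    have hqpre : p' <+: (List.replicate m r).flatten := by
      refine List.prefix_of_prefix_length_le (hppre.trans hpowp.2.2)
        (flatten_replicate_prefix (by omega) r) ?_
      rw [hlp', length_flatten_replicate]
      exact Nat.le_mul_of_pos_right m (by omega)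
    have hqpre' : p' <+: (List.replicate p'.length r).flatten := by
      rw [hlp']; exact hqpre
    have hpow' : IsPow r p' ((m : ℚ) / r.length) :=
      ⟨hr_ne, by rw [hlp']; field_simp, hqpre'⟩
    have hrevtake : p'.reverse = p.reverse.drop (u.length + 2) := by
      rw [hp', List.reverse_take]
      congr 1
      omega
    have hfac : FactorL (appendL s (σ ++ w ++ η ++ [x] ++ u)) p' := by
      refine ⟨u.length + 1, ?_⟩
      unfold OccursL
      apply List.ext_getElem?
      intro n
      rcases lt_or_ge n m with hn | hn
      · rw [hrevtake, List.getElem?_drop]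
        have h1 : p.reverse[(u.length + 2) + n]? =
            some (appendL s v ((u.length + 2) + n)) := by
          simpa using occursL_getElem? hsufp (by omega)
        rw [h1, List.getElem?_map, List.getElem?_range (by omega : n < p'.length)]
        rw [Option.map_some]
        congr 1
        rw [hv, show u.length + 2 + n = (u.length + 1 + n) + 1 from by omega]
        exact appendL_concat_succ s (σ ++ w ++ η ++ [x] ++ u) y (u.length + 1 + n)
      · rw [List.getElem?_eq_none (by rw [List.length_reverse, hlp']; omega),
          List.getElem?_eq_none (by rw [List.length_map, List.length_range, hlp']; omega)]
    have hα' : α ≤ (m : ℚ) / r.length := (le_div_iff₀ hrQ).mpr h8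
    exact (hpfree p' hfac) r p' _ hα' hpow' (List.infix_refl p')
  -- final arithmetic contradiction
  have hmQ : (m : ℚ) = (p.length : ℚ) - u.length - 2 := by
    rw [hmdef]
    push_cast [Nat.cast_sub hm2]
    ring
  have hf1Q : (η.length : ℚ) + u.length + 2 < (p.length : ℚ) := by exact_mod_cast hfact1
  have hrwQ : (r.length : ℚ) ≤ (w.length : ℚ) := by exact_mod_cast hcon
  nlinarith [mul_le_mul_of_nonneg_left hrwQ (by linarith : (0:ℚ) ≤ α + 1)]

end PowerFreeFormalization
end

section
/- Assume α ≥ 5, (s, σ, w, η, x, u) ∈ Δ, y ∈ Σ_k with y ≠ x, and (r, β) ∈ Π(s, σ, w, η, x, u, y). If r^β is not a suffix of the word ηxuy, then r^(β−2) is a suffix of ηxuy and r^(β−1) is a suffix of wηxuy. -/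
namespace PowerFreeFormalization

variable {A : Type*}

section Helpers

open List

variable {A : Type*}

lemma getElem_list_congr {l l' : List A} (h : l = l') {i : ℕ} (hi : i < l.length) :
    l[i]'hi = l'[i]'(h ▸ hi) := by subst h; rfl

lemma getElem_idx_congr {l : List A} {i j : ℕ} (h : i = j) (hj : j < l.length) :
    l[i]'(h ▸ hj) = l[j]'hj := by subst h; rfl

lemma length_flatten_rep (r : List A) (n : ℕ) :
    (List.replicate n r).flatten.length = n * r.length := by
  simp [List.length_flatten, List.map_replicate, List.sum_replicate, smul_eq_mul]

lemma pow_mono (r : List A) {m n : ℕ} (h : m ≤ n) :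
    (List.replicate m r).flatten <+: (List.replicate n r).flatten := by
  obtain ⟨k, rfl⟩ := Nat.exists_eq_add_of_le h
  rw [List.replicate_add, List.flatten_append]
  exact List.prefix_append _ _

lemma pow_norm {r p : List A} {n : ℕ} (hr : r ≠ [])
    (hp : p <+: (List.replicate n r).flatten) :
    p <+: (List.replicate p.length r).flatten := by
  have hr1 : 1 ≤ r.length := List.length_pos_iff.mpr hr
  refine List.prefix_of_prefix_length_le
    (hp.trans (pow_mono r (le_max_left n p.length)))
    (pow_mono r (le_max_right n p.length)) ?_
  rw [length_flatten_rep]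
  calc p.length = p.length * 1 := by ring
    _ ≤ p.length * r.length := Nat.mul_le_mul_left _ hr1

lemma drop_pow {r p : List A} {n : ℕ}
    (hp : p <+: (List.replicate n r).flatten) :
    p.drop r.length <+: p := by
  cases n with
  | zero =>
    simp only [List.replicate_zero, List.flatten_nil] at hp
    rw [List.prefix_nil.mp hp]
    simp
  | succ m =>
    have h1 := hp.drop r.length
    have h2 : ((List.replicate (m+1) r).flatten).drop r.length
        = (List.replicate m r).flatten := by
      rw [show m+1 = 1+m by omega, List.replicate_add, List.flatten_append]
      simp
    rw [h2] at h1
    refine List.prefix_of_prefix_length_le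
      (h1.trans (pow_mono r (Nat.le_succ m))) hp ?_
    simp

lemma pow_period_s7 {r p : List A} {n : ℕ}
    (hp : p <+: (List.replicate n r).flatten) {i : ℕ}
    (hi : i + r.length < p.length) :
    p[i]'(by omega) = p[i + r.length]'hi := by
  have hd := drop_pow hp
  have h1 : (p.drop r.length)[i]'(by simp; omega) = p[i]'(by omega) :=
    hd.getElem (by simp; omega)
  have h2 : (p.drop r.length)[i]'(by simp; omega) = p[r.length + i]'(by omega) :=
    List.getElem_drop
  rw [← h1, h2]
  exact getElem_list_congr (rfl) (by omega) |>.trans (by congr 1; omega)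

lemma suffixL_getElem {g : ℕ → A} {p : List A} (h : SuffixL g p) {i : ℕ}
    (hi : i < p.length) : p.reverse[i]'(by simpa) = g i := by
  unfold SuffixL OccursL at h
  rw [getElem_list_congr h (by simpa)]
  rw [List.getElem_map]
  simp

lemma suffixL_drop {g : ℕ → A} {p : List A} (h : SuffixL g p) (k : ℕ) :
    SuffixL g (p.drop k) := by
  have hpre : (p.drop k).reverse <+: p.reverse :=
    List.reverse_prefix.mpr (List.drop_suffix k p)
  unfold SuffixL OccursL
  apply List.ext_getElem (by simp)
  intro i h1 h2
  rw [List.getElem_map, List.getElem_range]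
  rw [hpre.getElem (by simpa using h1)]
  rw [suffixL_getElem h (by simp at h1; omega)]
  simp

lemma suffixL_length_eq {g : ℕ → A} {p q : List A} (hp : SuffixL g p)
    (hq : SuffixL g q) (h : p.length = q.length) : p = q := by
  unfold SuffixL OccursL at hp hq
  have : p.reverse = q.reverse := by rw [hp, hq, h]
  simpa using congrArg List.reverse this

lemma suffixL_suffix_s7 {g : ℕ → A} {p q : List A} (hp : SuffixL g p)
    (hq : SuffixL g q) (h : p.length ≤ q.length) : p <:+ q := by
  have h1 : SuffixL g (q.drop (q.length - p.length)) := suffixL_drop hq _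
  have h2 : p = q.drop (q.length - p.length) :=
    suffixL_length_eq hp h1 (by simp; omega)
  rw [h2]; exact List.drop_suffix _ _

lemma appendL_lt {s : ℕ → A} {L : List A} {n : ℕ} (hn : n < L.length) :
    appendL s L n = L.reverse[n]'(by simpa) := by
  unfold appendL
  exact List.getD_eq_getElem _ _ (by simpa)

lemma suffixL_appendL (s : ℕ → A) (L : List A) : SuffixL (appendL s L) L := by
  unfold SuffixL OccursL
  apply List.ext_getElem (by simp)
  intro i h1 h2
  rw [List.getElem_map, List.getElem_range]
  rw [appendL_lt (by simpa using h1)]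
  simp

lemma suffixL_of_suffix_s7 {g : ℕ → A} {L q : List A} (h : SuffixL g L)
    (hq : q <:+ L) : SuffixL g q := by
  obtain ⟨t, rfl⟩ := hq
  have h2 := suffixL_drop h t.length
  simpa using h2

lemma appendL_shift (s : ℕ → A) (M N : List A) (n : ℕ) :
    appendL s (M ++ N) (n + N.length) = appendL s M n := by
  unfold appendL
  rw [List.reverse_append, List.getD_append_right _ _ _ _ (by simp)]
  have h1 : n + N.length - N.reverse.length = n := by simp
  have h2 : n + N.length - (M ++ N).length = n - M.length := by
    simp [List.length_append]; omega
  rw [h1, h2]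

lemma suffixL_period {g : ℕ → A} {p r : List A} {n : ℕ} (hs : SuffixL g p)
    (hp : p <+: (List.replicate n r).flatten) {a : ℕ}
    (ha : a + r.length < p.length) : g (a + r.length) = g a := by
  have h1 := suffixL_getElem hs (i := a) (by omega)
  have h2 := suffixL_getElem hs (i := a + r.length) ha
  rw [← h1, ← h2]
  rw [List.getElem_reverse, List.getElem_reverse]
  have h3 := pow_period_s7 hp (i := p.length - 1 - (a + r.length))
    (hi := by omega)
  have hidx : p.length - 1 - (a + r.length) + r.length = p.length - 1 - a := by
    omega
  rw [h3]
  exact getElem_idx_congr hidx _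

lemma suffixL_dropLast {g : ℕ → A} {p : List A} (h : SuffixL g p) :
    SuffixL (fun n => g (n + 1)) p.dropLast := by
  rcases eq_or_ne p [] with rfl | hne
  · unfold SuffixL OccursL; simp
  obtain ⟨t, ht⟩ := List.reverse_suffix.mpr (List.dropLast_prefix p)
  have hlt : t.length = 1 := by
    have := congrArg List.length ht
    simp at this
    have hp1 : 1 ≤ p.length := List.length_pos_iff.mpr hne
    omega
  unfold SuffixL OccursL
  apply List.ext_getElem (by simp)
  intro i h1 h2
  rw [List.getElem_map, List.getElem_range]
  have hi : i < p.length - 1 := by simpa using h1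
  have e1 : p.reverse[i+1]'(by simp; omega) = p.dropLast.reverse[i]'(by simpa) := by
    rw [getElem_list_congr ht.symm (by simp; omega)]
    rw [List.getElem_append_right (by omega)]
    congr 1
    omega
  rw [← e1, suffixL_getElem h (by omega)]
  simp

end Helpers

lemma suffixL_head {A : Type*} {g : ℕ → A} {a : A} {q : List A}
    (h : SuffixL g ([a] ++ q)) : g q.length = a := by
  have h1 := suffixL_getElem h (i := q.length) (by simp)
  rw [← h1]
  rw [getElem_list_congr (show ([a] ++ q).reverse = q.reverse ++ [a] by simp)
    (by simp)]
  rw [List.getElem_append_right (by simp)]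
  simp

/-- Lemma: if `(s,σ,w,η,x,u) ∈ Δ`, `y ≠ x`,
`(r,β) ∈ Π(s,σ,w,η,x,u,y)` and `r^β` is not a suffix of `ηxuy`, then `r^(β-2)` is a
suffix of `ηxuy` and `r^(β-1)` is a suffix of `wηxuy`. -/
theorem statement7 (k : ℕ) (hk : 3 ≤ k) (α : ℚ) (hα : 5 ≤ α)
    (s : ℕ → Fin k) (σ w η u : List (Fin k)) (x y : Fin k)
    (r : List (Fin k)) (β : ℚ)
    (hΔ : Delta α s σ w η x u) (hyx : y ≠ x)
    (hPi : PiCond α s σ w η x u y r β)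
    (hnsuf : ¬ ∃ p : List (Fin k), IsPow r p β ∧ p <:+ (η ++ [x] ++ u ++ [y])) :
    (∃ p : List (Fin k), IsPow r p (β - 2) ∧ p <:+ (η ++ [x] ++ u ++ [y])) ∧
    (∃ p : List (Fin k), IsPow r p (β - 1) ∧ p <:+ (w ++ η ++ [x] ++ u ++ [y])) := by
  obtain ⟨hw, hPFL, hGam, hUniq, hFx, hxu⟩ := hΔ
  obtain ⟨hr, hβα, hfree, p, ⟨hr', hplen, hppre⟩, hpsuf⟩ := hPi
  have hrl : 1 ≤ r.length := List.length_pos_iff.mpr hr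
  have hw1 : 1 ≤ w.length := List.length_pos_iff.mpr hw
  have hβ5 : (5:ℚ) < β := lt_of_le_of_lt hα hβα
  have hrq : (0:ℚ) < r.length := by exact_mod_cast hrl
  have hp2r : 2 * r.length < p.length := by
    have h : (2 * (r.length:ℚ)) < p.length := by rw [hplen]; nlinarith
    exact_mod_cast h
  -- suffixes of the infinite word
  have hgL : SuffixL (appendL s (σ ++ w ++ η ++ [x] ++ u ++ [y]))
      (σ ++ w ++ η ++ [x] ++ u ++ [y]) := suffixL_appendL _ _
  have hsufT : SuffixL (appendL s (σ ++ w ++ η ++ [x] ++ u ++ [y]))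
      (η ++ [x] ++ u ++ [y]) := suffixL_of_suffix_s7 hgL ⟨σ ++ w, by simp⟩
  have hsufWT : SuffixL (appendL s (σ ++ w ++ η ++ [x] ++ u ++ [y]))
      (w ++ η ++ [x] ++ u ++ [y]) := suffixL_of_suffix_s7 hgL ⟨σ, by simp⟩
  have hsufX : SuffixL (appendL s (σ ++ w ++ η ++ [x] ++ u ++ [y]))
      ([x] ++ (u ++ [y])) := suffixL_of_suffix_s7 hgL ⟨σ ++ w ++ η, by simp⟩
  have hsufUY : SuffixL (appendL s (σ ++ w ++ η ++ [x] ++ u ++ [y]))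
      (u ++ [y]) := suffixL_of_suffix_s7 hgL ⟨σ ++ w ++ η ++ [x], by simp⟩
  -- p is longer than ηxuy
  have hpT : η.length + u.length + 2 < p.length := by
    by_contra hcon
    push_neg at hcon
    refine hnsuf ⟨p, ⟨hr, hplen, hppre⟩, suffixL_suffix_s7 hpsuf hsufT ?_⟩
    simp
    omega
  -- the letter x sits at offset |u|+1
  have hgx : appendL s (σ ++ w ++ η ++ [x] ++ u ++ [y]) (u.length + 1) = x := by
    have h1 := suffixL_head hsufX
    simpa using h1
  -- letters at offsets ≤ |u| come from u++[y]
  have hguy : ∀ i, i < u.length + 1 →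
      appendL s (σ ++ w ++ η ++ [x] ++ u ++ [y]) i ∈ u ++ [y] := by
    intro i hi
    have h1 := suffixL_getElem hsufUY (i := i) (by simpa using hi)
    rw [← h1]
    exact List.mem_reverse.mp (List.getElem_mem _)
  -- Step 1 : |r| ≥ |u| + 2
  have hru : u.length + 2 ≤ r.length := by
    by_contra hcon
    push_neg at hcon
    have h1 : (u.length + 1 - r.length) + r.length = u.length + 1 := by omega
    have hper := suffixL_period hpsuf hppre (a := u.length + 1 - r.length)
      (by omega)
    rw [h1, hgx] at hper
    have h3 : x ∈ u ++ [y] := by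
      rw [hper]
      exact hguy _ (by omega)
    rcases List.mem_append.mp h3 with h4 | h4
    · obtain ⟨s1, t1, he⟩ := List.mem_iff_append.mp h4
      exact hxu ⟨s1, t1, by rw [he]; simp⟩
    · simp at h4
      exact hyx h4.symm
  -- power-freeness bound : |p| - 1 < α |r|
  have hPF : (p.length : ℚ) - 1 < α * r.length := by
    by_contra hcon
    push_neg at hcon
    have hpne : p ≠ [] := by
      refine List.length_pos_iff.mp ?_
      omega
    have hfun : ∀ n, appendL s (σ ++ w ++ η ++ [x] ++ u ++ [y]) (n + 1)
        = appendL s (σ ++ w ++ η ++ [x] ++ u) n := by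
      intro n
      have h1 := appendL_shift s (σ ++ w ++ η ++ [x] ++ u) [y] n
      simpa using h1
    have hsl : SuffixL (appendL s (σ ++ w ++ η ++ [x] ++ u)) p.dropLast := by
      have h0 := suffixL_dropLast hpsuf
      unfold SuffixL OccursL at h0 ⊢
      rw [h0]
      apply List.map_congr_left
      intro j hj
      exact hfun (0 + j)
    have hrne : (r.length:ℚ) ≠ 0 := ne_of_gt hrq
    have hβ'' : IsPow r p.dropLast (((p.length : ℚ) - 1) / r.length) := by
      refine ⟨hr, ?_, pow_norm hr ((List.dropLast_prefix p).trans hppre)⟩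
      rw [List.length_dropLast, Nat.cast_sub (by omega : 1 ≤ p.length)]
      push_cast
      field_simp
    have hαle : α ≤ ((p.length : ℚ) - 1) / r.length := by
      rw [le_div_iff₀ hrq]
      linarith
    exact hPFL p.dropLast ⟨0, hsl⟩ r p.dropLast _ hαle hβ'' (List.infix_refl _)
  -- Step 2 : |p| < |ηxuy| + |w| + |r|  (else w occurs twice in sσw)
  have hlen2 : p.length < (η.length + u.length + 2) + w.length + r.length := by
    by_contra hcon
    push_neg at hcon
    have hshift : ∀ n, appendL s (σ ++ w) n =
        appendL s (σ ++ w ++ η ++ [x] ++ u ++ [y])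
          (n + (η.length + u.length + 2)) := by
      intro n
      have h1 := appendL_shift s (σ ++ w) (η ++ [x] ++ u ++ [y]) n
      rw [show (η ++ [x] ++ u ++ [y]).length = η.length + u.length + 2 by
        simp; omega] at h1
      rw [← h1]
      congr 1
      simp
    have hocc0 : OccursL (appendL s (σ ++ w)) w 0 :=
      suffixL_of_suffix_s7 (suffixL_appendL s (σ ++ w)) (List.suffix_append σ w)
    have hwg : ∀ j, ∀ hj : j < w.length, w.reverse[j]'(by simpa using hj) =
        appendL s (σ ++ w ++ η ++ [x] ++ u ++ [y])
          (j + (η.length + u.length + 2)) := by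
      intro j hj
      rw [suffixL_getElem hocc0 hj, hshift]
    have hoccr : OccursL (appendL s (σ ++ w)) w r.length := by
      unfold OccursL
      apply List.ext_getElem (by simp)
      intro i h1 h2
      rw [List.getElem_map, List.getElem_range]
      have hi : i < w.length := by simpa using h1
      rw [hwg i hi, hshift]
      have hper := suffixL_period hpsuf hppre
        (a := i + (η.length + u.length + 2)) (by omega)
      rw [← hper]
      congr 1
      omega
    obtain ⟨i0, hi0, huq⟩ := hUniq
    have e0 := huq 0 hocc0
    have er := huq r.length hoccr
    omega
  -- the two powers
  have hq1pre : p.drop r.length <+: (List.replicate p.length r).flatten :=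
    (drop_pow hppre).trans hppre
  have hq2pre : (p.drop r.length).drop r.length
      <+: (List.replicate p.length r).flatten :=
    ((drop_pow hq1pre).trans (drop_pow hppre)).trans hppre
  have hdd : (p.drop r.length).drop r.length = p.drop (2 * r.length) := by
    rw [List.drop_drop]
    congr 1
    omega
  -- bound for claim 1
  have h2r : p.length - 2 * r.length ≤ η.length + u.length + 2 := by
    by_contra hcon
    push_neg at hcon
    obtain ⟨hw', hGam2⟩ := hGam
    have hrw : r.length < w.length := by omega
    have hγ := hGam2 (by omega)
    have hpowge : α ^ 1 ≤ α ^ (w.length - u.length) :=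
      pow_le_pow_right₀ (by linarith) (by omega)
    have hEq : (α + 1) * α * (w.length:ℚ) ≤ (η.length:ℚ) := by
      refine le_trans ?_ hγ
      have hwq : (0:ℚ) ≤ (w.length:ℚ) := by positivity
      have h5 := mul_le_mul_of_nonneg_right
        (mul_le_mul_of_nonneg_left hpowge (by linarith : (0:ℚ) ≤ α + 1)) hwq
      simpa [pow_one] using h5
    have hc1 : (η.length:ℚ) + u.length + 2 + 2 * r.length + 1 ≤ (p.length:ℚ) := by
      have h : η.length + u.length + 2 + 2 * r.length + 1 ≤ p.length := by omega
      exact_mod_cast h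
    have hrwq : (r.length:ℚ) + 1 ≤ (w.length:ℚ) := by exact_mod_cast hrw
    have hwq1 : (1:ℚ) ≤ (w.length:ℚ) := by exact_mod_cast hw1
    have huq0 : (0:ℚ) ≤ (u.length:ℚ) := by positivity
    nlinarith [hPF, hEq, hc1, hrwq, hwq1, huq0, hrq,
      mul_le_mul_of_nonneg_left hrwq (show (0:ℚ) ≤ α by linarith),
      mul_le_mul_of_nonneg_left hwq1 (show (0:ℚ) ≤ α * α by nlinarith)]
  constructor
  · refine ⟨p.drop (2 * r.length), ⟨hr, ?_, pow_norm hr (hdd ▸ hq2pre)⟩, ?_⟩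
    · rw [List.length_drop, Nat.cast_sub (by omega)]
      rw [hplen]
      push_cast
      ring
    · refine suffixL_suffix_s7 (suffixL_drop hpsuf _) hsufT ?_
      simp
      omega
  · refine ⟨p.drop r.length, ⟨hr, ?_, pow_norm hr hq1pre⟩, ?_⟩
    · rw [List.length_drop, Nat.cast_sub (by omega)]
      rw [hplen]
      ring
    · refine suffixL_suffix_s7 (suffixL_drop hpsuf _) hsufWT ?_
      simp
      omega

end PowerFreeFormalization
end

section
/- Assume α ≥ 5, (s, σ, w, η, x, u) ∈ Δ, y ∈ Σ_k with y ≠ x, and (r, β) ∈ Π(s, σ, w, η, x, u, y). If r^β is not a suffix of the word ηxuy, then there exists a prefix η̄ of η such that (s, σ, w, η̄, x, uy) ∈ Δ. -/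
namespace PowerFreeFormalization

variable {A : Type*}

/- ### Auxiliary lemmas -/

lemma gidx (l : List A) {i j : ℕ} (hj : j < l.length) (h : i = j) : l[i]'(h ▸ hj) = l[j] := by
  subst h; rfl

lemma appendL_append (f : ℕ → A) (z1 z2 : List A) :
    appendL f (z1 ++ z2) = appendL (appendL f z1) z2 := by
  funext n
  simp only [appendL, List.reverse_append, List.length_append]
  rcases lt_or_ge n z2.length with h | h
  · rw [List.getD_append _ _ _ _ (by simpa using h),
      List.getD_eq_getElem _ _ (by simpa using h), List.getD_eq_getElem _ _ (by simpa using h)]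
  · have h2 : z2.reverse.length ≤ n := by simpa using h
    rw [List.getD_append_right _ _ _ _ h2]
    simp only [List.length_reverse]
    have hi : n - (z1.length + z2.length) = n - z2.length - z1.length := by omega
    rw [hi]
    conv_rhs => rw [List.getD_eq_default _ _ h2]

lemma appendL_lt_s8 (f : ℕ → A) (z : List A) {i : ℕ} (h : i < z.length) :
    appendL f z i = z.reverse[i]'(by simpa using h) :=
  List.getD_eq_getElem _ _ (by simpa using h)

lemma appendL_ge (f : ℕ → A) (z : List A) (i : ℕ) :
    appendL f z (z.length + i) = f i := by
  simp only [appendL]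
  rw [List.getD_eq_default _ _ (by simp), Nat.add_sub_cancel_left]

lemma appendL_single_zero (f : ℕ → A) (c : A) : appendL f [c] 0 = c := rfl

lemma appendL_single_succ (f : ℕ → A) (c : A) (i : ℕ) : appendL f [c] (i + 1) = f i := by
  simpa [Nat.add_comm] using appendL_ge f [c] i

lemma occursL_getElem {f : ℕ → A} {p : List A} {i : ℕ} (h : OccursL f p i) :
    ∀ j (hj : j < p.length), f (i + j) = p[p.length - 1 - j]'(by omega) := by
  intro j hj
  have h1 : f (i + j) = p.reverse[j]'(by simpa using hj) := by
    have := List.getElem_of_eq h.symm (l := (List.range p.length).map fun j => f (i + j))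
      (i := j) (by simpa using hj)
    simpa using this
  rw [h1, List.getElem_reverse]

lemma occursL_mk {f : ℕ → A} {p : List A} {i : ℕ}
    (h : ∀ j (hj : j < p.length), f (i + j) = p[p.length - 1 - j]'(by omega)) :
    OccursL f p i := by
  unfold OccursL
  apply List.ext_getElem (by simp)
  intro j h1 h2
  rw [List.getElem_reverse]
  simp only [List.getElem_map, List.getElem_range]
  exact (h j (by simpa using h1)).symm

lemma occursL_congr {f f' : ℕ → A} {p : List A} {a a' : ℕ} (h : OccursL f p a)
    (he : ∀ j, j < p.length → f' (a' + j) = f (a + j)) : OccursL f' p a' :=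
  occursL_mk fun j hj => (he j hj).trans (occursL_getElem h j hj)

lemma occursL_appendL_self (f : ℕ → A) (z : List A) : OccursL (appendL f z) z 0 :=
  occursL_mk fun j hj => by
    rw [zero_add, appendL_lt_s8 f z hj, List.getElem_reverse]

lemma occursL_zero_suffix {f : ℕ → A} {p1 p2 : List A} (h1 : OccursL f p1 0)
    (h2 : OccursL f p2 0) (hle : p1.length ≤ p2.length) : p1 <:+ p2 := by
  have hd : p2.drop (p2.length - p1.length) = p1 := by
    apply List.ext_getElem (by simp; omega)
    intro j hj1 hj2
    rw [List.getElem_drop]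
    have e2 := occursL_getElem h2 (p1.length - 1 - j) (by omega)
    have e1 := occursL_getElem h1 (p1.length - 1 - j) (by omega)
    simp only [zero_add] at e1 e2
    have e1' := e1.trans (gidx p1 hj2 (by omega))
    have e2' := e2.trans (gidx p2 (by simp at hj1; omega)
      (show p2.length - 1 - (p1.length - 1 - j) = p2.length - p1.length + j by omega))
    rw [← e1', ← e2']
  conv_rhs => rw [← List.take_append_drop (p2.length - p1.length) p2]
  rw [hd]
  exact ⟨_, rfl⟩

lemma occursL_infix {f : ℕ → A} {e p : List A} {i : ℕ} (ho : OccursL f e i) (h : p <:+: e) :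
    ∃ a, i ≤ a ∧ a + p.length ≤ i + e.length ∧ OccursL f p a := by
  obtain ⟨s1, s2, he⟩ := h
  have hlen : e.length = s1.length + p.length + s2.length := by
    rw [← he]; simp [Nat.add_assoc]
  refine ⟨i + s2.length, by omega, by omega, occursL_mk fun j hj => ?_⟩
  have h1 := occursL_getElem ho (s2.length + j) (by omega)
  have h1' := h1.trans (gidx e (by omega)
    (show e.length - 1 - (s2.length + j) = s1.length + (p.length - 1 - j) by omega))
  have hcast : e[s1.length + (p.length - 1 - j)]'(by omega)
      = p[p.length - 1 - j]'(by omega) := by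
    have he2 : s1 ++ (p ++ s2) = e := by rw [← he]; simp
    have := List.getElem_of_eq he2.symm (i := s1.length + (p.length - 1 - j)) (by omega)
    rw [this, List.getElem_append_right (by omega), List.getElem_append_left (by omega)]
    exact gidx p (by omega) (by omega)
  rw [show i + s2.length + j = i + (s2.length + j) from by omega, h1', hcast]

lemma length_flatten_replicate_s8 (N : ℕ) (v : List A) :
    (List.replicate N v).flatten.length = N * v.length := by
  induction N with
  | zero => simp
  | succ N ih => simp [List.replicate_succ, ih, Nat.succ_mul, Nat.add_comm]

lemma getElem_flatten_replicate {v : List A} (hv : 0 < v.length) (N j : ℕ)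
    (hj : j < N * v.length) :
    (List.replicate N v).flatten[j]'(by rw [length_flatten_replicate_s8]; exact hj)
      = v[j % v.length]'(Nat.mod_lt _ hv) := by
  induction N generalizing j with
  | zero => omega
  | succ N ih =>
    have hrep : (List.replicate (N+1) v).flatten = v ++ (List.replicate N v).flatten := by
      rw [List.replicate_succ, List.flatten_cons]
    rw [List.getElem_of_eq hrep (by rw [length_flatten_replicate_s8]; exact hj)]
    rcases lt_or_ge j v.length with h | h
    · rw [List.getElem_append_left h]
      exact gidx v (Nat.mod_lt _ hv) (Nat.mod_eq_of_lt h).symm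
    · rw [List.getElem_append_right (by simpa [length_flatten_replicate_s8] using h)]
      have hj' : j - v.length < N * v.length := by
        have hm : (N+1)*v.length = N*v.length + v.length := by ring
        omega
      have h2 : (List.replicate N v).flatten[j - v.length]'(by
          rw [length_flatten_replicate_s8]; exact hj')
          = v[(j - v.length) % v.length]'(Nat.mod_lt _ hv) := ih (j - v.length) hj'
      rw [h2]
      exact (gidx v (Nat.mod_lt _ hv) (Nat.mod_eq_sub_mod h)).symm

lemma IsPow.getElem' {r p : List A} {β : ℚ} (h : IsPow r p β) (m : ℕ) (hm : m < p.length) :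
    p[m] = r[m % r.length]'(Nat.mod_lt _ (List.length_pos_iff.mpr h.1)) := by
  have hq : 0 < r.length := List.length_pos_iff.mpr h.1
  have h1 := h.2.2.getElem hm
  rw [h1]
  exact getElem_flatten_replicate hq p.length m
    (lt_of_lt_of_le hm (Nat.le_mul_of_pos_right _ hq))

/-- If a window of length `len` ending at offset `i` in the left-infinite word `f`
has period `ν` with `α * ν ≤ len`, then `f` is not `α`-power free. -/
lemma not_powFreeL_of_period {α : ℚ} (hα : 5 ≤ α) {f : ℕ → A} (hf : PowFreeL α f)
    (i len ν : ℕ) (hν : 0 < ν) (hlen : α * ν ≤ (len : ℚ))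
    (hper : ∀ o, o + ν + 1 ≤ len → f (i + (o + ν)) = f (i + o)) : False := by
  set lc := ⌈α * (ν : ℚ)⌉₊ with hlcdef
  have hαν0 : (0:ℚ) ≤ α * ν := by positivity
  have hlc1 : α * (ν:ℚ) ≤ lc := Nat.le_ceil _
  have hlcle : lc ≤ len := Nat.ceil_le.mpr hlen
  have hνlc : ν ≤ lc := by
    have : (ν:ℚ) ≤ lc := by nlinarith
    exact_mod_cast this
  have hlc0 : 0 < lc := by omega
  set e : List A := (List.range lc).map (fun j => f (i + (lc - 1 - j))) with hedef
  have helen : e.length = lc := by simp [hedef]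
  have heget : ∀ j (hj : j < lc), e[j]'(by omega) = f (i + (lc - 1 - j)) := by
    intro j hj
    simp [hedef]
  have hper' : ∀ m (hm : m + ν < lc), e[m + ν]'(by omega) = e[m]'(by omega) := by
    intro m hm
    rw [heget _ (by omega), heget _ (by omega)]
    have h1 := hper (lc - 1 - m - ν) (by omega)
    rw [show lc - 1 - m - ν + ν = lc - 1 - m from by omega] at h1
    rw [show lc - 1 - (m + ν) = lc - 1 - m - ν from by omega]
    exact h1.symm
  have hmod : ∀ m (hm : m < lc), e[m]'(by omega)
      = e[m % ν]'(by have := Nat.mod_lt m hν; omega) := by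
    intro m
    induction m using Nat.strong_induction_on with
    | _ m ih =>
      intro hm
      rcases lt_or_ge m ν with h | h
      · exact gidx e (by have := Nat.mod_lt m hν; omega) (Nat.mod_eq_of_lt h).symm
      · have h1 : (m - ν) + ν = m := by omega
        have h2 := hper' (m - ν) (by omega)
        rw [gidx e (by omega) h1] at h2
        rw [h2, ih (m - ν) (by omega) (by omega)]
        exact gidx e (by have := Nat.mod_lt m hν; omega) (Nat.mod_eq_sub_mod h).symm
  set v : List A := e.take ν with hvdef
  have hvlen : v.length = ν := by simp [hvdef, helen]; omega
  have hvget : ∀ j (hj : j < ν), v[j]'(by omega) = e[j]'(by omega) := by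
    intro j hj
    simp [hvdef]
  have hflat : (List.replicate e.length v).flatten.take lc = e := by
    apply List.ext_getElem
    · simp [length_flatten_replicate_s8, helen, hvlen]
      calc lc = lc * 1 := by ring
      _ ≤ lc * ν := Nat.mul_le_mul_left _ hν
    · intro j hj1 hj2
      rw [List.getElem_take]
      have hjlc : j < lc := by simpa [helen] using hj2
      have hfr := getElem_flatten_replicate (v := v) (by omega) e.length j
        (by rw [helen, hvlen]; calc j < lc := hjlc
            _ = lc * 1 := by ring
            _ ≤ lc * ν := Nat.mul_le_mul_left _ hν)
      rw [hfr]
      have hmv : j % v.length = j % ν := by rw [hvlen]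
      rw [gidx v (by rw [hvlen]; exact Nat.mod_lt _ hν) hmv]
      rw [hvget _ (Nat.mod_lt _ hν), ← hmod j hjlc]
  have hpre : e <+: (List.replicate e.length v).flatten := by
    conv_lhs => rw [← hflat]
    exact List.take_prefix _ _
  have hvne : v ≠ [] := List.ne_nil_of_length_pos (by omega)
  have hpow : IsPow v e ((lc : ℚ) / ν) := by
    refine ⟨hvne, ?_, hpre⟩
    rw [helen, hvlen]
    field_simp
  have hβ : α ≤ (lc:ℚ) / ν := by
    rw [le_div_iff₀ (by exact_mod_cast hν)]
    exact hlc1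
  have hocc : OccursL f e i := occursL_mk (fun j hj => by
    rw [heget (e.length - 1 - j) (by omega)]
    congr 1
    omega)
  exact hf e ⟨i, hocc⟩ v e _ hβ hpow (List.infix_rfl)

set_option maxHeartbeats 4000000 in
/-- Proposition: if `(s,σ,w,η,x,u) ∈ Δ`, `y ≠ x`,
`(r,β) ∈ Π(s,σ,w,η,x,u,y)` and `r^β` is not a suffix of `ηxuy`, then there is a
prefix `η̄` of `η` with `(s,σ,w,η̄,x,uy) ∈ Δ`. -/
theorem statement8 (k : ℕ) (hk : 3 ≤ k) (α : ℚ) (hα : 5 ≤ α)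
    (s : ℕ → Fin k) (σ w η u : List (Fin k)) (x y : Fin k)
    (r : List (Fin k)) (β : ℚ)
    (hΔ : Delta α s σ w η x u) (hyx : y ≠ x)
    (hPi : PiCond α s σ w η x u y r β)
    (hnsuf : ¬ ∃ p : List (Fin k), IsPow r p β ∧ p <:+ (η ++ [x] ++ u ++ [y])) :
    ∃ η' : List (Fin k), η' <+: η ∧ Delta α s σ w η' x (u ++ [y]) := by
  classical
  obtain ⟨hw, hfree, hΓ, huniq, hxs, hxu⟩ := hΔ
  obtain ⟨hrne, hαβ, hufree, p, hpow, hsuf⟩ := hPi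
  have hα1 : (1:ℚ) ≤ α := by linarith
  have hα0 : (0:ℚ) ≤ α := by linarith
  have hq0 : 0 < r.length := List.length_pos_iff.mpr hrne
  have hW0 : 0 < w.length := List.length_pos_iff.mpr hw
  set q := r.length with hqdef
  set U := u.length with hUdef
  set nE := η.length with hnEdef
  set W := w.length with hWdef
  set L := p.length with hLdef
  set t : ℕ → Fin k := appendL s (σ ++ w ++ η ++ [x] ++ u ++ [y]) with htdef
  set g : ℕ → Fin k := appendL s (σ ++ w ++ η ++ [x] ++ u) with hgdef
  set sw : ℕ → Fin k := appendL s (σ ++ w) with hswdef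
  -- structural decompositions
  have hexp : t = appendL g [y] := by
    rw [htdef, hgdef]; exact appendL_append s (σ ++ w ++ η ++ [x] ++ u) [y]
  have hgt : ∀ i, g i = t (i + 1) := by
    intro i; rw [hexp]; exact (appendL_single_succ g y i).symm
  have hgu : g = appendL (appendL s (σ ++ w ++ η ++ [x])) u := by
    rw [hgdef]; exact appendL_append s (σ ++ w ++ η ++ [x]) u
  have hf2 : appendL s (σ ++ w ++ η ++ [x]) = appendL (appendL s (σ ++ w ++ η)) [x] :=
    appendL_append s (σ ++ w ++ η) [x]
  have hf1 : appendL s (σ ++ w ++ η) = appendL sw η := by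
    rw [hswdef]; exact appendL_append s (σ ++ w) η
  -- letters of t
  have ht0 : t 0 = y := by rw [hexp]; exact appendL_single_zero g y
  have htu : ∀ j, j < U → t (j + 1) ∈ u := by
    intro j hj
    rw [hexp, appendL_single_succ, hgu, appendL_lt_s8 _ _ (show j < u.length from hj)]
    exact List.mem_reverse.mp (List.getElem_mem _)
  have htx : t (U + 1) = x := by
    rw [hexp, appendL_single_succ, hgu]
    have h1 : appendL (appendL s (σ ++ w ++ η ++ [x])) u (u.length + 0)
        = appendL s (σ ++ w ++ η ++ [x]) 0 := appendL_ge _ _ 0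
    rw [show U = u.length + 0 from by omega, h1, hf2]
    exact appendL_single_zero _ x
  have htf1 : ∀ i, U + 2 ≤ i → t i = appendL sw η (i - (U + 2)) := by
    intro i hi
    obtain ⟨j, rfl⟩ : ∃ j, i = U + 2 + j := ⟨i - (U+2), by omega⟩
    rw [hexp, show U + 2 + j = (U + 1 + j) + 1 from by omega, appendL_single_succ, hgu,
      show U + 1 + j = u.length + (1 + j) from by omega, appendL_ge, hf2,
      show 1 + j = j + 1 from by omega, appendL_single_succ, hf1]
    congr 1
    omega
  have htm : ∀ i, nE + U + 2 ≤ i → t i = sw (i - (nE + U + 2)) := by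
    intro i hi
    rw [htf1 i (by omega), show i - (U + 2) = η.length + (i - (nE + U + 2)) from by omega]
    exact appendL_ge _ _ _
  -- the period function
  set rr : ℕ → Fin k := fun c => r.getD (c % q) x with hrrdef
  have hrrget : ∀ c, rr c = r[c % q]'(Nat.mod_lt _ hq0) := by
    intro c
    rw [hrrdef]
    exact List.getD_eq_getElem _ _ (Nat.mod_lt _ hq0)
  have hrr_q : ∀ c, rr (c + q) = rr c := by
    intro c; simp only [hrrdef, Nat.add_mod_right]
  have hrr_addmul : ∀ c z, rr (c + q * z) = rr c := by
    intro c z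
    simp only [hrrdef, Nat.add_mul_mod_self_left]
  have hrr_mod : ∀ c, rr (c % q) = rr c := by
    intro c
    simp only [hrrdef, Nat.mod_mod_of_dvd c (dvd_refl q)]
  have htp : ∀ o, o < L → t o = rr (L - 1 - o) := by
    intro o ho
    have h1 := occursL_getElem hsuf o ho
    rw [zero_add] at h1
    rw [h1, hpow.getElem' (L - 1 - o) (by omega), hrrget]
  have htper : ∀ o, o + q < L → t (o + q) = t o := by
    intro o ho
    rw [htp _ (by omega), htp _ (by omega),
      show L - 1 - o = (L - 1 - (o + q)) + q from by omega]
    exact (hrr_q _).symm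
  -- basic numeric facts
  have hLβ : (L:ℚ) = β * q := hpow.2.1
  have hqQ : (0:ℚ) < q := by exact_mod_cast hq0
  have hLgtQ : α * q < (L:ℚ) := by rw [hLβ]; nlinarith
  have hL5 : 5 * q < L := by
    have h5 : (5:ℚ) * q < L := by nlinarith
    exact_mod_cast h5
  -- L > |ηxuy| (else r^β would be a suffix of ηxuy)
  have hLm : nE + U + 2 < L := by
    by_contra hcon
    push_neg at hcon
    apply hnsuf
    refine ⟨p, hpow, ?_⟩
    have hzz : OccursL t (η ++ [x] ++ u ++ [y]) 0 := by
      have hsplit : σ ++ w ++ η ++ [x] ++ u ++ [y]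
          = (σ ++ w) ++ (η ++ [x] ++ u ++ [y]) := by simp [List.append_assoc]
      rw [htdef, hsplit, appendL_append]
      exact occursL_appendL_self _ _
    exact occursL_zero_suffix hsuf hzz (by simp; omega)
  -- w occurs in sσw only at position 0
  have hwocc0 : OccursL sw w 0 := by
    have h1 : OccursL (appendL (appendL s σ) w) w 0 := occursL_appendL_self _ _
    rw [hswdef, appendL_append]
    exact h1
  have hsw0 : ∀ j (hj : j < W), sw j = w[w.length - 1 - j]'(by omega) := by
    intro j hj
    have h1 := occursL_getElem hwocc0 j hj
    rwa [zero_add] at h1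
  have huniq0 : ∀ n', OccursL sw w n' → n' = 0 := by
    obtain ⟨iu, hiu, hiuu⟩ := huniq
    intro n' hn'
    have e1 := hiuu n' hn'
    have e2 := hiuu 0 hwocc0
    omega
  -- unique occurrence of w bounds L
  have hF2 : L < nE + U + 2 + W + q := by
    by_contra hcon
    push_neg at hcon
    have hoccq : OccursL sw w q := by
      apply occursL_mk
      intro j hj
      have h1 := htm (nE + U + 2 + (q + j)) (by omega)
      rw [show nE + U + 2 + (q + j) - (nE + U + 2) = q + j from by omega] at h1
      have h2 := htm (nE + U + 2 + j) (by omega)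
      rw [show nE + U + 2 + j - (nE + U + 2) = j from by omega] at h2
      have h3 : t (nE + U + 2 + (q + j)) = t (nE + U + 2 + j) := by
        rw [htp _ (by omega), htp _ (by omega),
          show L - 1 - (nE + U + 2 + j) = (L - 1 - (nE + U + 2 + (q + j))) + q from by omega]
        exact (hrr_q _).symm
      rw [← h1, h3, h2]
      exact hsw0 j (by omega)
    have := huniq0 q hoccq
    omega
  -- the period is longer than |xu|
  have hUq : U + 2 ≤ q := by
    by_contra hcon
    push_neg at hcon
    have h2 : t (U + 1 - q) = x := by
      have h3 : t ((U + 1 - q) + q) = t (U + 1 - q) := htper _ (by omega)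
      rw [show (U + 1 - q) + q = U + 1 from by omega, htx] at h3
      exact h3.symm
    rcases Nat.eq_zero_or_pos (U + 1 - q) with h0 | hpos
    · rw [h0, ht0] at h2
      exact hyx h2
    · obtain ⟨j, hj⟩ : ∃ j, U + 1 - q = j + 1 := ⟨U - q, by omega⟩
      rw [hj] at h2
      have hmem := htu j (by omega)
      rw [h2] at hmem
      obtain ⟨l1, l2, hu⟩ := List.append_of_mem hmem
      exact hxu ⟨l1, l2, by rw [hu]; simp⟩
  -- the period is at most |η|
  have hF2Q : (L:ℚ) ≤ nE + U + W + q + 1 := by exact_mod_cast (show L ≤ nE + U + W + q + 1 by omega)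
  have hUqQ : (U:ℚ) + 2 ≤ q := by exact_mod_cast hUq
  have hWQ : (1:ℚ) ≤ W := by exact_mod_cast hW0
  have hqh : q ≤ nE := by
    by_contra hcon
    push_neg at hcon
    have c4 : (nE:ℚ) + 1 ≤ q := by exact_mod_cast hcon
    have h3q : 3 * (q:ℚ) < U + W := by nlinarith
    have hUWQ : (U:ℚ) + 1 ≤ W := by linarith
    have hUW : U + 1 ≤ W := by exact_mod_cast hUWQ
    have hΓ2 : (α + 1) * α ^ (W - U) * (W:ℚ) ≤ (nE:ℚ) := hΓ.2 (by omega)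
    have hpow5 : (5:ℚ) ≤ α ^ (W - U) := by
      calc (5:ℚ) ≤ α := hα
      _ = α ^ 1 := (pow_one α).symm
      _ ≤ α ^ (W - U) := pow_le_pow_right₀ hα1 (by omega)
    have hPW : 5 * (W:ℚ) ≤ α ^ (W - U) * W := mul_le_mul_of_nonneg_right hpow5 (by positivity)
    have h30 : 30 * (W:ℚ) ≤ nE := by
      calc 30 * (W:ℚ) = 6 * (5 * W) := by ring
      _ ≤ (α + 1) * (α ^ (W - U) * W) := mul_le_mul (by linarith) hPW (by positivity) (by linarith)
      _ = (α + 1) * α ^ (W - U) * W := by ring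
      _ ≤ nE := hΓ2
    linarith
  -- the new word with η shortened by one period
  set tb : ℕ → Fin k := appendL s (σ ++ w ++ η.take (nE - q) ++ [x] ++ (u ++ [y])) with htbdef
  have hη'len : (η.take (nE - q)).length = nE - q := by
    rw [List.length_take]
    omega
  have htb1 : tb = appendL (appendL s (σ ++ w ++ η.take (nE - q) ++ [x]) ) (u ++ [y]) := by
    rw [htbdef]
    exact appendL_append s (σ ++ w ++ η.take (nE - q) ++ [x]) (u ++ [y])
  have htb2 : tb = appendL (appendL (appendL s (σ ++ w ++ η.take (nE - q) ++ [x])) u) [y] := by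
    rw [htb1]
    exact appendL_append _ u [y]
  have hf2' : appendL s (σ ++ w ++ η.take (nE - q) ++ [x])
      = appendL (appendL s (σ ++ w ++ η.take (nE - q))) [x] :=
    appendL_append s (σ ++ w ++ η.take (nE - q)) [x]
  have hf1' : appendL s (σ ++ w ++ η.take (nE - q)) = appendL sw (η.take (nE - q)) := by
    rw [hswdef]; exact appendL_append s (σ ++ w) (η.take (nE - q))
  have htb0 : tb 0 = y := by rw [htb2]; exact appendL_single_zero _ y
  have htbu : ∀ j, j < U → tb (j + 1) = t (j + 1) := by
    intro j hj
    rw [htb2, appendL_single_succ, appendL_lt_s8 _ _ (show j < u.length from hj)]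
    rw [hexp, appendL_single_succ, hgu, appendL_lt_s8 _ _ (show j < u.length from hj)]
  have htbx : tb (U + 1) = x := by
    rw [htb2, appendL_single_succ]
    have h1 : appendL (appendL s (σ ++ w ++ η.take (nE - q) ++ [x])) u (u.length + 0)
        = appendL s (σ ++ w ++ η.take (nE - q) ++ [x]) 0 := appendL_ge _ _ 0
    rw [show U = u.length + 0 from by omega, h1, hf2']
    exact appendL_single_zero _ x
  have htbf1 : ∀ i, U + 2 ≤ i → tb i = appendL sw (η.take (nE - q)) (i - (U + 2)) := by
    intro i hi
    obtain ⟨j, rfl⟩ : ∃ j, i = U + 2 + j := ⟨i - (U+2), by omega⟩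
    rw [htb2, show U + 2 + j = (U + 1 + j) + 1 from by omega, appendL_single_succ,
      show U + 1 + j = u.length + (1 + j) from by omega, appendL_ge, hf2',
      show 1 + j = j + 1 from by omega, appendL_single_succ, hf1']
    congr 1
    omega
  have hshift : ∀ jm, appendL sw (η.take (nE - q)) jm = appendL sw η (q + jm) := by
    intro jm
    rcases lt_or_ge jm (nE - q) with hlt | hge
    · rw [appendL_lt_s8 _ _ (show jm < (η.take (nE - q)).length from by omega),
        appendL_lt_s8 _ _ (show q + jm < η.length from by omega),
        List.getElem_reverse, List.getElem_reverse, List.getElem_take]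
      exact gidx η (by omega) (by rw [hη'len]; omega)
    · have h1 : appendL sw (η.take (nE - q)) ((η.take (nE - q)).length + (jm - (nE - q)))
          = sw (jm - (nE - q)) := appendL_ge _ _ _
      rw [show jm = (η.take (nE - q)).length + (jm - (nE - q)) from by rw [hη'len]; omega, h1]
      have h2 : appendL sw η (η.length + (jm - (nE - q))) = sw (jm - (nE - q)) :=
        appendL_ge _ _ _
      rw [show q + ((η.take (nE-q)).length + (jm - (nE - q))) = η.length + (jm - (nE - q))
        from by rw [hη'len]; omega, h2]
  have htb_hi : ∀ i, U + 2 ≤ i → tb i = t (i + q) := by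
    intro i hi
    rw [htbf1 i hi, hshift, htf1 (i + q) (by omega)]
    congr 1
    omega
  have htb_low : ∀ i, i ≤ U + 1 → tb i = t i := by
    intro i hi
    rcases Nat.eq_zero_or_pos i with rfl | hpos
    · rw [htb0, ht0]
    · obtain ⟨j, rfl⟩ : ∃ j, i = j + 1 := ⟨i - 1, by omega⟩
      rcases lt_or_ge j U with hj | hj
      · exact htbu j hj
      · have hjU : j = U := by omega
        subst hjU
        rw [htbx, htx]
  have htbW0 : ∀ j, tb ((nE - q) + U + 2 + j) = sw j := by
    intro j
    rw [htbf1 _ (by omega), show (nE - q) + U + 2 + j - (U + 2) = (nE - q) + j from by omega,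
      hshift, show q + ((nE - q) + j) = η.length + j from by omega]
    exact appendL_ge _ _ _
  have htb_mid : ∀ i, i < L - q → tb i = t i := by
    intro i hi
    rcases le_or_gt i (U + 1) with h | h
    · exact htb_low i h
    · rw [htb_hi i (by omega)]
      exact htper i (by omega)
  have hnEqQ : ((nE - q : ℕ):ℚ) = (nE:ℚ) - q := by
    rw [Nat.cast_sub hqh]
  refine ⟨η.take (nE - q), List.take_prefix _ _, hw, ?_, ⟨hw, ?_⟩, huniq, hxs, ?_⟩
  · -- PowFreeL
    show PowFreeL α tb
    intro e hfac r' p' β' hβ' hpow' hinf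
    obtain ⟨i0, hocc⟩ := hfac
    obtain ⟨a, hia, hae, hocc'⟩ := occursL_infix hocc hinf
    have hn0 : 0 < r'.length := List.length_pos_iff.mpr hpow'.1
    have hlen'Q : (p'.length:ℚ) = β' * r'.length := hpow'.2.1
    have hn0Q : (1:ℚ) ≤ r'.length := by exact_mod_cast hn0
    have hb5 : (5:ℚ) ≤ β' := le_trans hα hβ'
    have h5n : 5 * (r'.length:ℚ) ≤ β' * r'.length := by nlinarith
    have hlen5 : 5 * r'.length ≤ p'.length := by
      have h51 : 5 * (r'.length:ℚ) ≤ p'.length := by linarith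
      exact_mod_cast h51
    have hp'0 : 0 < p'.length := by omega
    have per : ∀ o, a ≤ o → o + r'.length + 1 ≤ a + p'.length →
        tb (o + r'.length) = tb o := by
      intro o h1 h2
      have e1 := occursL_getElem hocc' (o - a) (by omega)
      have e2 := occursL_getElem hocc' (o + r'.length - a) (by omega)
      rw [show a + (o - a) = o from by omega] at e1
      rw [show a + (o + r'.length - a) = o + r'.length from by omega] at e2
      have g1 := hpow'.getElem' (p'.length - 1 - (o - a)) (by omega)
      have g2 := hpow'.getElem' (p'.length - 1 - (o + r'.length - a)) (by omega)
      rw [e2, g2, e1, g1]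
      exact gidx r' (Nat.mod_lt _ hn0) (by
        rw [show p'.length - 1 - (o - a)
            = (p'.length - 1 - (o + r'.length - a)) + r'.length from by omega,
          Nat.add_mod_right])
    have hcontra : ∀ b, OccursL g p' b → False := by
      intro b hb
      exact hfree p' ⟨b, hb⟩ r' p' β' hβ' hpow' List.infix_rfl
    rcases le_or_gt (U + 2) a with hcase1 | hcase2
    · -- entirely in the shifted region
      apply hcontra (a + q - 1)
      refine occursL_congr hocc' (fun j hj => ?_)
      have h1 : g (a + q - 1 + j) = t (a + q + j) := by
        rw [hgt]; congr 1; omega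
      rw [h1, show a + q + j = (a + j) + q from by omega]
      exact (htb_hi (a + j) (by omega)).symm
    rcases le_or_gt (a + p'.length) (L - q) with hcase3 | hcase4
    · -- entirely inside the periodic region
      rcases Nat.eq_zero_or_pos a with rfl | ha1
      · apply hcontra (q - 1)
        refine occursL_congr hocc' (fun j hj => ?_)
        have h1 : g (q - 1 + j) = t (q + j) := by
          rw [hgt]; congr 1; omega
        have h2 : t (q + j) = t j := by
          rw [show q + j = j + q from by omega]
          exact htper j (by omega)
        rw [h1, h2, show (0:ℕ) + j = j from by omega]
        exact (htb_mid j (by omega)).symm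
      · apply hcontra (a - 1)
        refine occursL_congr hocc' (fun j hj => ?_)
        have h1 : g (a - 1 + j) = t (a + j) := by
          rw [hgt]; congr 1; omega
        rw [h1]
        exact (htb_mid (a + j) (by omega)).symm
    -- the power crosses the junction
    have hfinal : L < a + r'.length + 2 * q → False := by
      intro hLa
      have hble : a + p'.length < (nE - q) + U + 2 + W + r'.length := by
        by_contra hc
        push_neg at hc
        have hoccn : OccursL sw w r'.length := by
          apply occursL_mk
          intro j hj
          have hA := htbW0 (r'.length + j)
          have hB := htbW0 j
          have hper2 := per ((nE - q) + U + 2 + j) (by omega) (by omega)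
          rw [show (nE - q) + U + 2 + j + r'.length = (nE - q) + U + 2 + (r'.length + j)
            from by omega] at hper2
          rw [← hA, hper2, hB]
          exact hsw0 j (by omega)
        have := huniq0 r'.length hoccn
        omega
      have c4 : (a:ℚ) ≤ U + 1 := by exact_mod_cast (show a ≤ U + 1 from by omega)
      have c5 : (L:ℚ) + 1 ≤ a + r'.length + 2 * q := by
        exact_mod_cast (show L + 1 ≤ a + r'.length + 2 * q from by omega)
      have c6 : (a:ℚ) + p'.length + 1 ≤ ((nE:ℚ) - q) + U + 2 + W + r'.length := by
        rw [← hnEqQ]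
        exact_mod_cast (show a + p'.length + 1 ≤ (nE - q) + U + 2 + W + r'.length
          from by omega)
      have c8 : (nE:ℚ) + U + 2 + 1 ≤ L := by
        exact_mod_cast (show nE + U + 2 + 1 ≤ L from by omega)
      have c10 : (q:ℚ) ≤ nE := by exact_mod_cast hqh
      have e5 : 5 * (q:ℚ) < L := by nlinarith
      have d1 : 4 * (r'.length:ℚ) ≤ (nE:ℚ) - q + U + W + 1 - a := by linarith
      have d2 : 4 * (L:ℚ) ≤ nE + 7 * q + 4 * U + W := by linarith
      have d3 : 13 * (L:ℚ) < 5 * nE + 20 * U + 5 * W := by linarith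
      have d4 : 3 * (nE:ℚ) + 13 * U + 74 < 5 * W := by linarith
      have hnn : (0:ℚ) ≤ nE := by positivity
      have hUWQ : (U:ℚ) + 1 ≤ W := by linarith
      have hUW : U + 1 ≤ W := by exact_mod_cast hUWQ
      have hΓ2 : (α + 1) * α ^ (W - U) * (W:ℚ) ≤ (nE:ℚ) := hΓ.2 (by omega)
      have hpow5 : (5:ℚ) ≤ α ^ (W - U) := by
        calc (5:ℚ) ≤ α := hα
        _ = α ^ 1 := (pow_one α).symm
        _ ≤ α ^ (W - U) := pow_le_pow_right₀ hα1 (by omega)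
      have hPW : 5 * (W:ℚ) ≤ α ^ (W - U) * W :=
        mul_le_mul_of_nonneg_right hpow5 (by positivity)
      have h30 : 30 * (W:ℚ) ≤ nE := by
        calc 30 * (W:ℚ) = 6 * (5 * W) := by ring
        _ ≤ (α + 1) * (α ^ (W - U) * W) :=
          mul_le_mul (by linarith) hPW (by positivity) (by linarith)
        _ = (α + 1) * α ^ (W - U) * W := by ring
        _ ≤ nE := hΓ2
      linarith
    by_cases hdvd : q ∣ r'.length
    · rcases le_or_gt (a + r'.length) (L - q) with hle | hgt2
      · -- the period of p extends one step to the left: contradiction in g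
        have h1 : tb (L - q) = tb (L - q - r'.length) := by
          have hper2 := per (L - q - r'.length) (by omega) (by omega)
          rwa [show L - q - r'.length + r'.length = L - q from by omega] at hper2
        have h2 : tb (L - q - r'.length) = rr (q - 1 + r'.length) := by
          rw [htb_mid _ (by omega), htp _ (by omega)]
          congr 1
          omega
        have h2b : rr (q - 1 + r'.length) = rr (q - 1) := by
          obtain ⟨c, hc⟩ := hdvd
          rw [hc]
          exact hrr_addmul _ _
        have h3 : tb (L - q) = t L := by
          rw [htb_hi (L - q) (by omega)]
          congr 1
          omega
        have htL : t L = rr (q - 1) := by rw [← h3, h1, h2, h2b]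
        refine not_powFreeL_of_period hα hfree 0 L q hq0 (le_of_lt hLgtQ) ?_
        intro o ho
        simp only [zero_add]
        rcases lt_or_eq_of_le ho with hlt | heq
        · rw [hgt (o + q), hgt o, show o + q + 1 = (o + 1) + q from by omega]
          exact htper (o + 1) (by omega)
        · rw [hgt (o + q), hgt o, show o + q + 1 = L from heq, htL, htp (o + 1) (by omega),
            show L - 1 - (o + 1) = q - 1 from by omega]
      · exact hfinal (by omega)
    · rcases le_or_gt (a + r'.length + q) (L - q) with hle | hgt2
      · -- the period of p can be reduced mod q: contradiction in g
        have hν0 : 0 < r'.length % q :=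
          Nat.pos_of_ne_zero (fun h => hdvd (Nat.dvd_of_mod_eq_zero h))
        have hνq : r'.length % q < q := Nat.mod_lt _ hq0
        have hrot : ∀ j, j < q → rr (q + j + r'.length) = rr (q + j) := by
          intro j hj
          have hper2 := per (L - q - 1 - j - r'.length) (by omega) (by omega)
          rw [show L - q - 1 - j - r'.length + r'.length = L - q - 1 - j from by omega]
            at hper2
          have hA : tb (L - q - 1 - j) = rr (q + j) := by
            rw [htb_mid _ (by omega), htp _ (by omega)]
            congr 1
            omega
          have hB : tb (L - q - 1 - j - r'.length) = rr (q + j + r'.length) := by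
            rw [htb_mid _ (by omega), htp _ (by omega)]
            congr 1
            omega
          rw [hA, hB] at hper2
          exact hper2.symm
        have hrotall : ∀ c, rr (c + r'.length) = rr c := by
          intro c
          have hmodeq : (c + r'.length) % q = (c % q + r'.length) % q := by
            conv_lhs => rw [Nat.add_mod]
            conv_rhs => rw [Nat.add_mod, Nat.mod_mod_of_dvd c (dvd_refl q)]
          have h1 : rr (c + r'.length) = rr (c % q + r'.length) := by
            rw [← hrr_mod (c + r'.length), ← hrr_mod (c % q + r'.length), hmodeq]
          have h2 : rr (c % q + r'.length) = rr (q + c % q + r'.length) := by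
            rw [show q + c % q + r'.length = (c % q + r'.length) + q from by omega]
            exact (hrr_q _).symm
          have h3 := hrot (c % q) (Nat.mod_lt _ hq0)
          have h4 : rr (q + c % q) = rr (c % q) := by
            rw [show q + c % q = (c % q) + q from by omega]
            exact hrr_q _
          rw [h1, h2, h3, h4, hrr_mod]
        have hrotν : ∀ c, rr (c + r'.length % q) = rr c := by
          intro c
          have hd := Nat.div_add_mod r'.length q
          have h1 := hrr_addmul (c + r'.length % q) (r'.length / q)
          rw [show c + r'.length % q + q * (r'.length / q) = c + r'.length from by omega]
            at h1
          rw [← h1]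
          exact hrotall c
        have hL1Q : ((L - 1 : ℕ):ℚ) = (L:ℚ) - 1 := by
          rw [Nat.cast_sub (by omega)]
          norm_num
        refine not_powFreeL_of_period hα hfree 0 (L - 1) (r'.length % q) hν0 ?_ ?_
        · rw [hL1Q]
          have hν1 : ((r'.length % q : ℕ):ℚ) + 1 ≤ q := by exact_mod_cast hνq
          have hmul : α * ((r'.length % q : ℕ):ℚ) ≤ α * ((q:ℚ) - 1) :=
            mul_le_mul_of_nonneg_left (by linarith) hα0
          have hmul2 : α * ((q:ℚ) - 1) = α * q - α := by ring
          linarith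
        · intro o ho
          simp only [zero_add]
          rw [hgt (o + r'.length % q), hgt o, htp _ (by omega), htp _ (by omega),
            show L - 1 - (o + 1) = (L - 1 - (o + r'.length % q + 1)) + r'.length % q
              from by omega]
          exact (hrotν _).symm
      · exact hfinal (by omega)

  · -- Gamma length condition
    intro hle
    have hulen : (u ++ [y]).length = U + 1 := by simp [hUdef]
    rw [hulen] at hle ⊢
    rw [hη'len, hnEqQ]
    have hUW : U + 1 ≤ W := hle
    have hΓ2 : (α + 1) * α ^ (W - U) * (W:ℚ) ≤ (nE:ℚ) := hΓ.2 (by omega)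
    have hsplit : W - U = (W - (U + 1)) + 1 := by omega
    rw [hsplit, pow_succ] at hΓ2
    have hP1 : (1:ℚ) ≤ α ^ (W - (U + 1)) := by
      have h0 : α ^ 0 ≤ α ^ (W - (U + 1)) := pow_le_pow_right₀ hα1 (Nat.zero_le _)
      simpa using h0
    have hαE : α * ((α + 1) * α ^ (W - (U + 1)) * W) ≤ nE := by
      have hr : α * ((α + 1) * α ^ (W - (U + 1)) * W)
          = (α + 1) * (α ^ (W - (U + 1)) * α) * W := by ring
      rw [hr]
      exact hΓ2
    have hE0 : (0:ℚ) ≤ (α + 1) * α ^ (W - (U + 1)) * W := by positivity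
    have h5E : 5 * ((α + 1) * α ^ (W - (U + 1)) * W) ≤ nE := by nlinarith
    have hE6 : 6 * (W:ℚ) ≤ (α + 1) * α ^ (W - (U + 1)) * W := by
      have h1 : (1:ℚ) * W ≤ α ^ (W - (U + 1)) * W :=
        mul_le_mul_of_nonneg_right hP1 (by positivity)
      nlinarith
    have h4q : 4 * (q:ℚ) < nE + U + W + 1 := by nlinarith
    have hUWQ : (U:ℚ) + 1 ≤ W := by exact_mod_cast hUW
    linarith
  · -- x is not a factor of u ++ [y]
    rintro ⟨l1, l2, hinf⟩
    have hmem : x ∈ u ++ [y] := by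
      rw [← hinf]; simp
    rcases List.mem_append.mp hmem with hmu | hmy
    · obtain ⟨l1', l2', hu⟩ := List.append_of_mem hmu
      exact hxu ⟨l1', l2', by rw [hu]; simp⟩
    · simp at hmy
      exact hyx hmy.symm





end PowerFreeFormalization
end

section
/- Assume k ≥ 3 and α ≥ 5. If v is a bi-infinite α-power-free word over Σ_k and w is a nonempty finite factor of v, then there exist a bi-infinite α-power-free word v̄ over Σ_k and a letter x ∈ Σ_k such that w is a factor of v̄ and x is not a recurrent factor of v̄ (i.e. x has only finitely many occurrences in v̄). -/
namespace PowerFreeFormalization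

variable {A : Type*}

section Infra

variable {A : Type*}

/-- `f` has period `p` on the integer interval `[a, b]`. -/
def PerOn (f : ℤ → A) (a b : ℤ) (p : ℕ) : Prop :=
  ∀ q : ℤ, a ≤ q → q + p ≤ b → f q = f (q + p)

lemma PerOn.mono {f : ℤ → A} {a b a' b' : ℤ} {p : ℕ} (h : PerOn f a b p)
    (ha : a ≤ a') (hb : b' ≤ b) : PerOn f a' b' p :=
  fun q hq hq' => h q (le_trans ha hq) (le_trans hq' hb)

lemma PerOn.chase {f : ℤ → A} {a b : ℤ} {p : ℕ} (h : PerOn f a b p) :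
    ∀ (k : ℕ) (q : ℤ), a ≤ q → q + k * p ≤ b → f q = f (q + k * p) := by
  intro k
  induction k with
  | zero => intro q _ _; simp
  | succ k ih =>
    intro q hq hqb
    have hp1 : q + p ≤ b := by
      have : (k : ℤ) * p ≥ 0 := by positivity
      push_cast at hqb ⊢
      nlinarith
    have h1 : f q = f (q + p) := h q hq hp1
    have h2 : f (q + p) = f (q + p + k * p) := by
      apply ih (q + p) (by linarith [hq, (by positivity : (0:ℤ) ≤ (p:ℤ))])
      push_cast at hqb ⊢
      ring_nf
      ring_nf at hqb
      linarith
    rw [h1, h2]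
    congr 1
    push_cast
    ring

/-- equality of values at positions congruent mod the period, both inside the interval. -/
lemma PerOn.residue {f : ℤ → A} {a b : ℤ} {p : ℕ} (h : PerOn f a b p) (hp : 0 < p)
    {q q' : ℤ} (hq : a ≤ q) (hq' : a ≤ q') (hqb : q ≤ b) (hq'b : q' ≤ b)
    (hd : (p : ℤ) ∣ (q' - q)) : f q = f q' := by
  wlog hle : q ≤ q' generalizing q q' with H
  · exact (H hq' hq hq'b hqb (by rw [show q - q' = -(q' - q) by ring]; exact dvd_neg.mpr hd)
      (by omega)).symm
  obtain ⟨k, hk⟩ := hd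
  have hk0 : 0 ≤ k := by
    by_contra h'
    push_neg at h'
    have : (p : ℤ) * k < 0 := mul_neg_of_pos_of_neg (by exact_mod_cast hp) h'
    omega
  have hkt : ((k.toNat : ℤ)) = k := Int.toNat_of_nonneg hk0
  have key : (k.toNat : ℤ) * (p : ℤ) = q' - q := by rw [hkt]; linear_combination -hk
  have heq : q + (k.toNat : ℤ) * (p : ℤ) = q' := by rw [key]; ring
  have hchase := h.chase k.toNat q hq (by rw [heq]; exact hq'b)
  rw [hchase, heq]

/-- Fine and Wilf (weak version, without the gcd subtraction), ordered auxiliary. -/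
theorem fine_wilf_aux {f : ℤ → A} :
    ∀ (n p q : ℕ) (a b : ℤ), p + q ≤ n → 0 < p → 0 < q → p ≤ q →
    ((p : ℤ) + q ≤ b - a + 1) → PerOn f a b p → PerOn f a b q →
    PerOn f a b (Nat.gcd p q) := by
  intro n
  induction n with
  | zero => intro p q a b hn hp hq; omega
  | succ n ih =>
    intro p q a b hn hp hq hple hlen h1 h2
    rcases eq_or_lt_of_le hple with heq | hlt
    · subst heq
      simpa [Nat.gcd_self] using h1
    · -- p < q ; replace q by q - p on [a, b - p]
      have hpq : (p : ℤ) ≤ (q : ℤ) := by exact_mod_cast hlt.le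
      have hq' : 0 < q - p := by omega
      have hcast : ((q - p : ℕ) : ℤ) = (q : ℤ) - p := by
        push_cast [Nat.cast_sub hlt.le]; ring
      have hper' : PerOn f a (b - p) (q - p) := by
        intro x hx hxb
        rw [hcast] at hxb
        have hxq : x + q ≤ b := by omega
        have e1 : f x = f (x + q) := h2 x hx hxq
        have h' := h1 (x + ((q : ℤ) - p)) (by omega) (by
          have : x + ((q : ℤ) - p) + p = x + q := by ring
          rw [this]; exact hxq)
        have hrw : x + ((q : ℤ) - p) + p = x + q := by ring
        rw [hrw] at h'
        rw [hcast, e1, ← h']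
      have hperp' : PerOn f a (b - p) p := h1.mono le_rfl (by omega)
      have hgcd : Nat.gcd p (q - p) = Nat.gcd p q := by
        have hmod : q % p = (q - p) % p := Nat.mod_eq_sub_mod hlt.le
        rw [Nat.gcd_rec p q, Nat.gcd_rec p (q - p), hmod]
      have hlen' : (p : ℤ) + (q - p : ℕ) ≤ (b - p) - a + 1 := by rw [hcast]; omega
      have hrec : PerOn f a (b - p) (Nat.gcd p q) := by
        rw [← hgcd]
        rcases le_total p (q - p) with ho | ho
        · exact ih p (q - p) a (b - p) (by omega) hp hq' ho hlen' hperp' hper'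
        · rw [Nat.gcd_comm]
          exact ih (q - p) p a (b - p) (by omega) hq' hp ho (by rw [hcast]; omega)
            hper' hperp'
      -- extend to [a, b]
      set g := Nat.gcd p q with hg
      have hgdvdp : g ∣ p := Nat.gcd_dvd_left p q
      have hgdvdq : g ∣ q := Nat.gcd_dvd_right p q
      have hgpos : 0 < g := Nat.gcd_pos_of_pos_left q hp
      have hqpg : p + g ≤ q := by
        have hd : g ∣ q - p := Nat.dvd_sub hgdvdq hgdvdp
        have := Nat.le_of_dvd (by omega) hd
        omega
      have hqpg' : (p : ℤ) + g ≤ q := by exact_mod_cast hqpg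
      intro x hx hxb
      by_cases hcase : x + g ≤ b - p
      · exact hrec x hx hcase
      · push_neg at hcase
        have hxpa : a ≤ x - p := by omega
        have e1 : f (x - p) = f x := by
          have h' := h1 (x - p) hxpa (by omega)
          rw [h']; congr 1; ring
        have e2 : f (x - p) = f (x - p + g) := hrec (x - p) hxpa (by omega)
        have e3 : f (x - p + g) = f (x + g) := by
          have h' := h1 (x - p + g) (by omega) (by omega)
          rw [h']; congr 1; ring
        rw [← e1, e2, e3]

theorem fine_wilf {f : ℤ → A} {p q : ℕ} {a b : ℤ} (hp : 0 < p) (hq : 0 < q)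
    (hlen : (p : ℤ) + q ≤ b - a + 1) (h1 : PerOn f a b p) (h2 : PerOn f a b q) :
    PerOn f a b (Nat.gcd p q) := by
  rcases le_total p q with h | h
  · exact fine_wilf_aux (p + q) p q a b le_rfl hp hq h hlen h1 h2
  · rw [Nat.gcd_comm]
    exact fine_wilf_aux (q + p) q p a b le_rfl hq hp h (by linarith) h2 h1

/-- Propagation: a `g`-periodic sub-window of length `≥ P + g` inside a `P`-periodic
window (with `g ∣ P`) makes the whole window `g`-periodic. -/
theorem per_propagate {f : ℤ → A} {a b u v : ℤ} {P g : ℕ}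
    (hP : PerOn f a b P) (hg : PerOn f u v g) (hau : a ≤ u) (hvb : v ≤ b)
    (hdvd : g ∣ P) (hlen : (P : ℤ) + g ≤ v - u + 1) (hg0 : 0 < g) (hP0 : 0 < P) :
    PerOn f a b g := by
  intro x hx hxb
  have hgz : (0 : ℤ) ≤ g := by positivity
  have hPz : (0 : ℤ) < P := by exact_mod_cast hP0
  set y : ℤ := u + (x - u) % P with hy
  have hymem : u ≤ y ∧ y ≤ u + P - 1 := by
    constructor
    · have := Int.emod_nonneg (x - u) (by positivity : (P : ℤ) ≠ 0)
      omega
    · have := Int.emod_lt_of_pos (x - u) hPz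
      omega
  have hdvdyx : (P : ℤ) ∣ (y - x) := by
    have hdef : (x - u) % P = (x - u) - P * ((x - u) / P) := by
      rw [Int.emod_def]
    have : y - x = -(P * ((x - u) / P)) := by omega
    rw [this]
    exact dvd_neg.mpr ⟨_, rfl⟩
  have hy_in : a ≤ y ∧ y ≤ b := ⟨by omega, by omega⟩
  have hyg : y + g ≤ v := by omega
  have e1 : f x = f y :=
    hP.residue hP0 hx hy_in.1 (by omega) hy_in.2 hdvdyx
  have e2 : f y = f (y + g) := hg y hymem.1 hyg
  have e3 : f (y + g) = f (x + g) := by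
    apply hP.residue hP0 (by omega) (by omega) (by omega) hxb
    have : (x + g) - (y + g) = -(y - x) := by ring
    rw [this]
    exact dvd_neg.mpr hdvdyx
  rw [e1, e2, e3]

/-- counting lemma for `D`-spaced subsets of an interval of length `m`. -/
lemma card_spaced (T : Finset ℤ) (N : ℤ) (m D : ℕ) (hD : 0 < D)
    (hT : ∀ c ∈ T, N ≤ c ∧ c < N + m)
    (hs : ∀ c ∈ T, ∀ c' ∈ T, c ≠ c' → (D : ℤ) ≤ |c - c'|) :
    T.card ≤ m / D + 1 := by
  have hmaps : ∀ c ∈ T, ((c - N).toNat / D) ∈ Finset.range (m / D + 1) := by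
    intro c hc
    obtain ⟨h1, h2⟩ := hT c hc
    have hn : (c - N).toNat < m := by omega
    simp only [Finset.mem_range]
    have := Nat.div_le_div_right (c := D) (Nat.le_of_lt hn)
    omega
  have hinj : Set.InjOn (fun c : ℤ => (c - N).toNat / D) T := by
    intro c hc c' hc' heq
    by_contra hne
    have hD' := hs c hc c' hc' hne
    obtain ⟨h1, h2⟩ := hT c hc
    obtain ⟨h1', h2'⟩ := hT c' hc'
    simp only at heq
    have e1 := Nat.div_add_mod (c - N).toNat D
    have e2 := Nat.div_add_mod (c' - N).toNat D
    have m1 : (c - N).toNat % D < D := Nat.mod_lt _ hD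
    have m2 : (c' - N).toNat % D < D := Nat.mod_lt _ hD
    rw [heq] at e1
    have habs : |c - c'| < D := by
      rw [abs_lt]
      omega
    omega
  calc T.card ≤ (Finset.range (m / D + 1)).card :=
        Finset.card_le_card_of_injOn _ hmaps hinj
    _ = m / D + 1 := Finset.card_range _

end Infra

section ThueMorse

/-- The Thue-Morse sequence: parity of the binary digit sum. -/
def tmW : ℕ → Bool := fun n => (Nat.digits 2 n).sum % 2 == 1

lemma tmW_zero : tmW 0 = false := by simp [tmW]

lemma tmW_two_mul (m : ℕ) : tmW (2 * m) = tmW m := by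
  rcases Nat.eq_zero_or_pos m with h | h
  · subst h; rfl
  · unfold tmW
    rw [Nat.digits_def' (by norm_num : 1 < 2) (by omega : 0 < 2 * m)]
    have h1 : (2 * m) % 2 = 0 := by omega
    have h2 : (2 * m) / 2 = m := by omega
    rw [h1, h2, List.sum_cons]
    simp

lemma tmW_two_mul_add_one (m : ℕ) : tmW (2 * m + 1) = !tmW m := by
  unfold tmW
  rw [Nat.digits_def' (by norm_num : 1 < 2) (by omega : 0 < 2 * m + 1)]
  have h1 : (2 * m + 1) % 2 = 1 := by omega
  have h2 : (2 * m + 1) / 2 = m := by omega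
  rw [h1, h2, List.sum_cons]
  rcases Nat.mod_two_eq_zero_or_one ((Nat.digits 2 m).sum) with h | h
  · have : (1 + (Nat.digits 2 m).sum) % 2 = 1 := by omega
    simp [this, h]
  · have : (1 + (Nat.digits 2 m).sum) % 2 = 0 := by omega
    simp [this, h]

lemma tmW_one : tmW 1 = true := by
  have := tmW_two_mul_add_one 0
  simpa [tmW_zero] using this

lemma tmW_even_ne (m : ℕ) : tmW (2 * m) ≠ tmW (2 * m + 1) := by
  rw [tmW_two_mul, tmW_two_mul_add_one]
  cases tmW m <;> simp

lemma tmW_no_xxx (n : ℕ) : ¬ (tmW n = tmW (n + 1) ∧ tmW (n + 1) = tmW (n + 2)) := by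
  rintro ⟨hh1, hh2⟩
  rcases Nat.even_or_odd n with ⟨m, hm⟩ | ⟨m, hm⟩
  · have h2m : n = 2 * m := by omega
    have h2m1 : n + 1 = 2 * m + 1 := by omega
    exact tmW_even_ne m (by rw [← h2m]; exact hh1)
  · have h2m : n + 1 = 2 * (m + 1) := by omega
    have h2m1 : n + 2 = 2 * (m + 1) + 1 := by omega
    exact tmW_even_ne (m + 1) (by
      rw [← h2m]
      have : n + 1 + 1 = n + 2 := by ring
      rw [this]
      exact hh2)

/-- The Thue-Morse word contains no `ρ`-periodic factor of length `4ρ`. -/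
theorem tm4 : ∀ ρ : ℕ, 0 < ρ → ∀ a : ℕ,
    ¬ (∀ s : ℕ, s < 3 * ρ → tmW (a + s) = tmW (a + s + ρ)) := by
  intro ρ
  induction ρ using Nat.strong_induction_on with
  | _ ρ ih =>
  intro hρ a H
  rcases Nat.even_or_odd ρ with ⟨ρ', hρ'⟩ | ⟨s₀, hs₀⟩
  · -- even case: ρ = 2ρ'
    have hρ2 : ρ = 2 * ρ' := by omega
    have hρ'pos : 0 < ρ' := by omega
    apply ih ρ' (by omega) hρ'pos ((a + 1) / 2)
    intro s' hs'
    set a' := (a + 1) / 2 with ha'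
    have h2a' : a ≤ 2 * a' ∧ 2 * a' ≤ a + 1 := by constructor <;> omega
    have hlt : 2 * (a' + s') - a < 3 * ρ := by omega
    have hkey := H (2 * (a' + s') - a) hlt
    have hpos : a + (2 * (a' + s') - a) = 2 * (a' + s') := by omega
    rw [hpos] at hkey
    have hkey2 : tmW (2 * (a' + s')) = tmW (2 * (a' + s' + ρ')) := by
      rw [hkey]; congr 1; omega
    rwa [tmW_two_mul, tmW_two_mul] at hkey2
  · -- odd case: ρ = 2 s₀ + 1
    rcases Nat.eq_zero_or_pos s₀ with hz | hs₀pos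
    · -- ρ = 1
      subst hz
      have hρ1 : ρ = 1 := by omega
      subst hρ1
      have e1 := H 0 (by omega)
      have e2 := H 1 (by omega)
      exact tmW_no_xxx a ⟨by simpa using e1, by
        have : a + 1 + 1 = a + 2 := by ring
        simpa [this] using e2⟩
    · -- ρ = 2s₀+1, s₀ ≥ 1
      have hρ3 : 3 ≤ ρ := by omega
      set u₀ := (a + 1) / 2 with hu₀
      have h2u₀ : a ≤ 2 * u₀ ∧ 2 * u₀ ≤ a + 1 := by constructor <;> omega
      -- star: for u ∈ {u₀, u₀+1}: tmW (u + s₀) = !tmW u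
      have star : ∀ u : ℕ, u₀ ≤ u → u ≤ u₀ + 1 → tmW (u + s₀) = !tmW u := by
        intro u h1 h2
        have hmem : a ≤ 2 * u ∧ 2 * u - a < 3 * ρ := by omega
        have hkey := H (2 * u - a) hmem.2
        have hpos : a + (2 * u - a) = 2 * u := by omega
        rw [hpos] at hkey
        have : tmW (2 * u) = tmW (2 * (u + s₀) + 1) := by rw [hkey]; congr 1; omega
        rw [tmW_two_mul, tmW_two_mul_add_one] at this
        cases hc : tmW (u + s₀) <;> simp [hc] at this <;> simp [this]
      -- starstar: for u ∈ {u₀, u₀+1}: tmW (u + s₀ + 1) = !tmW u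
      have star2 : ∀ u : ℕ, u₀ ≤ u → u ≤ u₀ + 1 → tmW (u + s₀ + 1) = !tmW u := by
        intro u h1 h2
        have hmem : a ≤ 2 * u + 1 ∧ 2 * u + 1 - a < 3 * ρ := by omega
        have hkey := H (2 * u + 1 - a) hmem.2
        have hpos : a + (2 * u + 1 - a) = 2 * u + 1 := by omega
        rw [hpos] at hkey
        have : tmW (2 * u + 1) = tmW (2 * (u + s₀ + 1)) := by rw [hkey]; congr 1; omega
        rw [tmW_two_mul, tmW_two_mul_add_one] at this
        cases hc : tmW u <;> simp [hc] at this <;> simp [this]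
      have c1 : tmW (u₀ + s₀) = tmW (u₀ + s₀ + 1) := by
        rw [star u₀ le_rfl (by omega), star2 u₀ le_rfl (by omega)]
      have c2 : tmW (u₀ + s₀ + 1) = tmW (u₀ + s₀ + 2) := by
        have e1 := star (u₀ + 1) (by omega) le_rfl
        have e2 := star2 (u₀ + 1) (by omega) le_rfl
        have r1 : u₀ + 1 + s₀ = u₀ + s₀ + 1 := by ring
        have r2 : u₀ + 1 + s₀ + 1 = u₀ + s₀ + 2 := by ring
        rw [r1] at e1
        rw [r2] at e2
        rw [e1, e2]
      exact tmW_no_xxx (u₀ + s₀) ⟨c1, c2⟩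

end ThueMorse





section Windows

variable {A : Type*}

/-- length of a forbidden window with period `ρ`. -/
def LLen (α : ℚ) (ρ : ℕ) : ℕ := (⌈α * ρ⌉).toNat

/-- length of a "near-maximal" window with period `ρ`. -/
def lamLen (α : ℚ) (ρ : ℕ) : ℕ := LLen α ρ - ρ

/-- no forbidden periodic window anywhere. -/
def NoWin (α : ℚ) (f : ℤ → A) : Prop :=
  ∀ (i : ℤ) (ρ : ℕ), 0 < ρ → ¬ PerOn f i (i + ((LLen α ρ : ℤ) - 1)) ρ

lemma LLen_ge {α : ℚ} (hα : 5 ≤ α) (ρ : ℕ) : 5 * ρ ≤ LLen α ρ := by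
  have h1 : ((5 * ρ : ℕ) : ℚ) ≤ α * ρ := by
    push_cast
    nlinarith [show (0:ℚ) ≤ (ρ : ℚ) from by positivity]
  have h2 : ((5 * ρ : ℕ) : ℤ) ≤ ⌈α * ρ⌉ := by
    have := (Int.le_ceil (α * ρ))
    exact_mod_cast le_trans h1 this
  unfold LLen
  omega

lemma lam_ge {α : ℚ} (hα : 5 ≤ α) (ρ : ℕ) : 4 * ρ ≤ lamLen α ρ := by
  have := LLen_ge hα ρ; unfold lamLen; omega

lemma lam_add {α : ℚ} (hα : 5 ≤ α) (ρ : ℕ) : lamLen α ρ + ρ = LLen α ρ := by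
  have := LLen_ge hα ρ; unfold lamLen; omega

lemma LLen_le_lam {α : ℚ} (hα : 5 ≤ α) {g ρ' : ℕ} (hg : 0 < g) (h2 : 2 * g ≤ ρ') :
    LLen α g ≤ lamLen α ρ' := by
  have hρ' : 0 < ρ' := by omega
  have hcg : ((⌈α * g⌉ : ℤ) : ℚ) < α * g + 1 := Int.ceil_lt_add_one _
  have hcρ : (α * ρ' : ℚ) ≤ ((⌈α * ρ'⌉ : ℤ) : ℚ) := Int.le_ceil _
  have hkey : ((⌈α * g⌉ : ℤ) : ℚ) + ρ' ≤ ((⌈α * ρ'⌉ : ℤ) : ℚ) := by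
    have h2' : (2 * (g : ℚ)) ≤ (ρ' : ℚ) := by exact_mod_cast h2
    have hg' : (1 : ℚ) ≤ (g : ℚ) := by exact_mod_cast hg
    nlinarith [mul_nonneg (by linarith : (0:ℚ) ≤ α - 5)
      (by linarith : (0:ℚ) ≤ (ρ' : ℚ) - 2 * g)]
  have hkey' : ⌈α * g⌉ + (ρ' : ℤ) ≤ ⌈α * ρ'⌉ := by exact_mod_cast hkey
  have h5ρ := LLen_ge hα ρ'
  have hgoal : (⌈α * g⌉).toNat ≤ (⌈α * ρ'⌉).toNat - ρ' := by
    unfold LLen at h5ρ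
    omega
  simpa only [LLen, lamLen] using hgoal

lemma flatten_replicate_length (n : ℕ) (r : List A) :
    (List.replicate n r).flatten.length = n * r.length := by
  induction n with
  | zero => simp
  | succ n ih => simp [List.replicate_succ, ih]; ring

lemma flatten_replicate_getElem (n : ℕ) (r : List A) (j : ℕ) (hr : 0 < r.length)
    (hj : j < n * r.length) :
    (List.replicate n r).flatten[j]'(by rw [flatten_replicate_length]; exact hj) =
      r[j % r.length]'(Nat.mod_lt _ hr) := by
  induction n generalizing j with
  | zero => omega
  | succ n ih =>
    have he : (List.replicate (n+1) r).flatten = r ++ (List.replicate n r).flatten := by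
      rw [List.replicate_succ, List.flatten_cons]
    rw [List.getElem_of_eq he]
    by_cases hcase : j < r.length
    · rw [List.getElem_append_left hcase]
      congr 1
      exact (Nat.mod_eq_of_lt hcase).symm
    · push_neg at hcase
      have hj' : j - r.length < n * r.length := by
        have : (n + 1) * r.length = n * r.length + r.length := by ring
        omega
      rw [List.getElem_append_right hcase]
      have := ih (j - r.length) hj'
      rw [show (List.replicate n r).flatten[j - r.length]'(by
            rw [flatten_replicate_length]; exact hj') =
          r[(j - r.length) % r.length]'(Nat.mod_lt _ hr) from this]
      congr 1
      exact (Nat.mod_eq_sub_mod hcase).symm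

lemma coe_range (n : ℕ) :
    ((do let a ← List.range n; pure ((a : ℕ) : ℤ)) : List ℤ) =
      (List.range n).map (fun a => (a : ℤ)) := by
  simp [bind_pure_comp]

lemma occursZ_iff (v : ℤ → A) (q : List A) (i : ℤ) :
    OccursZ v q i ↔ q = (List.range q.length).map (fun j : ℕ => v (i + (j : ℤ))) := by
  unfold OccursZ
  rw [bind_pure_comp]
  simp only [List.map_eq_map, List.map_map, Function.comp_def]

lemma occursZ_mk (v : ℤ → A) (n : ℕ) (i : ℤ) :
    OccursZ v ((List.range n).map (fun j : ℕ => v (i + (j : ℤ)))) i := by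
  rw [occursZ_iff]
  simp

lemma occursZ_getElem {v : ℤ → A} {q : List A} {i : ℤ} (h : OccursZ v q i) :
    ∀ (j : ℕ) (hj : j < q.length), q[j] = v (i + j) := by
  rw [occursZ_iff] at h
  intro j hj
  rw [List.getElem_of_eq h hj]
  simp only [List.getElem_map, List.getElem_range]

lemma occursZ_of_infix {v : ℤ → A} {p q : List A} {i : ℤ}
    (hpq : p <:+: q) (h : OccursZ v q i) : ∃ i', OccursZ v p i' := by
  obtain ⟨s, t, hst⟩ := hpq
  refine ⟨i + s.length, ?_⟩
  rw [occursZ_iff]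
  apply List.ext_getElem (by simp)
  intro j h1 h2
  simp only [List.getElem_map, List.getElem_range]
  have hjq : s.length + j < q.length := by
    rw [← hst]; simp only [List.length_append]; omega
  have e1 : q[s.length + j]'hjq = v (i + (↑(s.length + j) : ℤ)) := occursZ_getElem h _ hjq
  have e2 : p[j]'h1 = q[s.length + j]'hjq := by
    rw [List.getElem_of_eq hst.symm hjq]
    have hidx : s.length + j < (s ++ p).length := by
      simp only [List.length_append]; omega
    rw [List.getElem_append_left hidx]
    have hsp : s.length ≤ s.length + j := by omega
    rw [List.getElem_append_right hsp]
    congr 1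
    omega
  rw [e2, e1]
  congr 1
  push_cast
  ring

lemma LLen_int {α : ℚ} (hρα : (0:ℚ) ≤ α) (ρ : ℕ) : ((LLen α ρ : ℕ) : ℤ) = ⌈α * ρ⌉ := by
  unfold LLen
  have : (0:ℤ) ≤ ⌈α * ρ⌉ := Int.ceil_nonneg (by positivity)
  omega

/-- `PowFreeZ → NoWin`. -/
lemma noWin_of_powFreeZ {α : ℚ} {v : ℤ → A} (hα : 5 ≤ α) (hv : PowFreeZ α v) :
    NoWin α v := by
  intro i ρ hρ hper
  have hα0 : (0:ℚ) ≤ α := by linarith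
  set L := LLen α ρ with hL
  have hL5 : 5 * ρ ≤ L := LLen_ge hα ρ
  have hL0 : ((L : ℕ) : ℤ) = ⌈α * ρ⌉ := LLen_int hα0 ρ
  have hLαρ : (α * ρ : ℚ) ≤ (L : ℚ) := by
    have h1 := Int.le_ceil (α * ρ)
    have h2 : ((L : ℕ) : ℚ) = ((⌈α * ρ⌉ : ℤ) : ℚ) := by exact_mod_cast hL0
    rw [h2]
    exact h1
  set p : List A := (List.range L).map (fun j : ℕ => v (i + (j : ℤ))) with hp
  set r : List A := (List.range ρ).map (fun j : ℕ => v (i + (j : ℤ))) with hr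
  have hplen : p.length = L := by rw [hp]; simp
  have hrlen : r.length = ρ := by rw [hr]; simp
  have hrne : r ≠ [] := by
    rw [← List.length_pos_iff_ne_nil, hrlen]
    exact hρ
  have hocc : OccursZ v p i := by
    have := occursZ_mk v L i
    rwa [← hp] at this
  have hoccr : OccursZ v r i := by
    have := occursZ_mk v ρ i
    rwa [← hr] at this
  have hpj : ∀ (j : ℕ) (hj : j < p.length), p[j] = v (i + (j:ℤ)) :=
    occursZ_getElem hocc
  have hrj : ∀ (j : ℕ) (hj : j < r.length), r[j] = v (i + (j:ℤ)) :=
    occursZ_getElem hoccr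
  -- periodicity: p[j] = r[j % ρ]
  have hperiodic : ∀ (j : ℕ) (hj : j < p.length),
      p[j] = r[j % ρ]'(by rw [hrlen]; exact Nat.mod_lt _ hρ) := by
    intro j hj
    rw [hpj j hj, hrj (j % ρ) (by rw [hrlen]; exact Nat.mod_lt _ hρ)]
    have hj' : j < L := by rwa [hplen] at hj
    symm
    apply hper.residue hρ
    · have : (0:ℤ) ≤ ((j % ρ : ℕ) : ℤ) := by positivity
      omega
    · have : (0:ℤ) ≤ ((j : ℕ) : ℤ) := by positivity
      omega
    · have h1 : ((j % ρ : ℕ) : ℤ) ≤ (j : ℤ) := by exact_mod_cast Nat.mod_le j ρ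
      have h2 : (j : ℤ) ≤ (L : ℤ) - 1 := by omega
      omega
    · have h2 : (j : ℤ) ≤ (L : ℤ) - 1 := by omega
      omega
    · have hdvd : ρ ∣ (j - j % ρ) := ⟨j / ρ, by
        have := Nat.div_add_mod j ρ
        omega⟩
      have hcast : ((j : ℕ) : ℤ) - ((j % ρ : ℕ) : ℤ) = ((j - j % ρ : ℕ) : ℤ) := by
        have := Nat.mod_le j ρ
        omega
      rw [show i + (j:ℤ) - (i + ((j % ρ : ℕ) : ℤ)) = (j:ℤ) - ((j % ρ : ℕ):ℤ) from by ring,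
        hcast]
      exact_mod_cast hdvd
  -- p is a prefix of (replicate p.length r).flatten
  have hpref : p <+: (List.replicate p.length r).flatten := by
    have hlenle : p.length ≤ (List.replicate p.length r).flatten.length := by
      rw [flatten_replicate_length, hrlen, hplen]
      nlinarith [hL5, hρ]
    have : p = ((List.replicate p.length r).flatten).take p.length := by
      apply List.ext_getElem
      · rw [List.length_take]
        omega
      · intro j h1 h2
        rw [List.getElem_take]
        have hjf : j < p.length * r.length := by
          rw [hrlen, hplen]
          have : j < L := by rwa [hplen] at h1
          nlinarith
        rw [flatten_replicate_getElem p.length r j (by rw [hrlen]; exact hρ) hjf]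
        rw [hperiodic j h1]
        congr 1
        rw [hrlen]
    refine ⟨(List.replicate p.length r).flatten.drop p.length, ?_⟩
    conv_rhs => rw [← List.take_append_drop p.length (List.replicate p.length r).flatten]
    rw [← this]
  -- assemble the forbidden power
  have hpow : IsPow r p ((L : ℚ) / ρ) := by
    refine ⟨hrne, ?_, hpref⟩
    rw [hplen, hrlen]
    field_simp
  have hβ : α ≤ (L : ℚ) / ρ := by
    rw [le_div_iff₀ (by exact_mod_cast hρ : (0:ℚ) < (ρ:ℚ))]
    exact hLαρ
  exact hv p ⟨i, hocc⟩ r p _ hβ hpow (List.infix_refl p)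

/-- `NoWin → PowFreeZ`. -/
lemma powFreeZ_of_noWin {α : ℚ} {v : ℤ → A} (hα : 5 ≤ α) (hnw : NoWin α v) :
    PowFreeZ α v := by
  intro q hq r p β hβ hpow hinf
  obtain ⟨i₀, hocc⟩ := hq
  obtain ⟨hrne, hlen, hpre⟩ := hpow
  set ρ := r.length with hρdef
  have hρ : 0 < ρ := List.length_pos_iff_ne_nil.mpr hrne
  -- length of p
  have hβ5 : (5:ℚ) ≤ β := le_trans hα hβ
  have hLp : (α * ρ : ℚ) ≤ (p.length : ℚ) := by
    rw [hlen]
    have : (0:ℚ) ≤ (ρ:ℚ) := by positivity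
    nlinarith
  have hLpL : LLen α ρ ≤ p.length := by
    have h1 : ((LLen α ρ : ℕ) : ℤ) = ⌈α * ρ⌉ := LLen_int (by linarith) ρ
    have h2 : (⌈α * ρ⌉ : ℤ) ≤ (p.length : ℤ) := by
      rw [Int.ceil_le]
      exact_mod_cast hLp
    omega
  -- occurrence of p
  obtain ⟨i₁, hocc₁⟩ := occursZ_of_infix hinf hocc
  -- p[j] = r[j % ρ]
  have hpr : ∀ (j : ℕ) (hj : j < p.length), v (i₁ + (j : ℤ)) = r[j % ρ]'(Nat.mod_lt _ hρ) := by
    intro j hj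
    have e1 : p[j]'hj = v (i₁ + j) := occursZ_getElem hocc₁ j hj
    have hjf : j < p.length * r.length := by nlinarith
    have e2 : p[j]'hj = (List.replicate p.length r).flatten[j]'(by
        rw [flatten_replicate_length]; exact hjf) := by
      apply List.IsPrefix.getElem hpre
    rw [← e1, e2]
    exact flatten_replicate_getElem p.length r j hρ hjf
  -- build the periodic window
  have hper : PerOn v i₁ (i₁ + ((LLen α ρ : ℤ) - 1)) ρ := by
    intro x hx hxb
    have hj : ∃ j : ℕ, x = i₁ + (j : ℤ) ∧ (j : ℤ) + ρ ≤ (LLen α ρ : ℤ) - 1 + 1 := by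
      refine ⟨(x - i₁).toNat, ?_, ?_⟩ <;> omega
    obtain ⟨j, hjx, hjb⟩ := hj
    have hjlt : j < p.length := by
      have : (j : ℤ) + ρ ≤ (p.length : ℤ) := by
        have : ((LLen α ρ : ℕ) : ℤ) ≤ (p.length : ℤ) := by exact_mod_cast hLpL
        omega
      omega
    have hjρlt : j + ρ < p.length ∨ j + ρ = p.length := by
      have : (j : ℤ) + ρ ≤ (p.length : ℤ) := by
        have : ((LLen α ρ : ℕ) : ℤ) ≤ (p.length : ℤ) := by exact_mod_cast hLpL
        omega
      omega
    have hmod : (j + ρ) % ρ = j % ρ := by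
      simp [Nat.add_mod_right]
    rcases hjρlt with hlt | heqq
    · have e1 := hpr j hjlt
      have e2 := hpr (j + ρ) hlt
      rw [hjx]
      rw [show i₁ + (j:ℤ) + ρ = i₁ + ((j + ρ : ℕ) : ℤ) from by push_cast; ring]
      rw [e1, e2]
      simp only [hmod]
    · -- j + ρ = p.length : need x + ρ ≤ i₁ + LLen - 1 ... but LLen ≤ p.length, and
      -- x + ρ ≤ i₁ + LLen - 1 + 1 means j + ρ ≤ LLen ≤ p.length, boundary case still fine:
      -- j + ρ = p.length and j + ρ ≤ LLen: so LLen = p.length; index j+ρ out of range!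
      exfalso
      have : (j : ℤ) + ρ ≤ (LLen α ρ : ℤ) - 1 := by omega
      have h2 : ((LLen α ρ : ℕ) : ℤ) ≤ (p.length : ℤ) := by exact_mod_cast hLpL
      omega
  exact hnw i₁ ρ hρ hper

end Windows





section GoodCut

variable {A : Type*}

/-- a near-maximal `ρ`-periodic window ending at `c`. -/
def WinAt (α : ℚ) (f : ℤ → A) (ρ : ℕ) (c : ℤ) : Prop :=
  PerOn f (c + 1 - (lamLen α ρ : ℤ)) c ρ

/-- the window extends one letter to the right. -/
def ExtAt (f : ℤ → A) (ρ : ℕ) (c : ℤ) : Prop :=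
  f (c + 1 - ρ) = f (c + 1)

/-- two non-extendable near-maximal windows with periods in the same dyadic band
cannot end close to each other. -/
lemma kill {α : ℚ} {f : ℤ → A} (hα : 5 ≤ α) (hnw : NoWin α f)
    {ρ ρ' : ℕ} {c c' : ℤ} {j : ℕ}
    (hb1 : 2^j ≤ ρ) (hb2 : ρ < 2^(j+1)) (hb1' : 2^j ≤ ρ') (hb2' : ρ' < 2^(j+1))
    (hw : WinAt α f ρ c) (he : ¬ ExtAt f ρ c)
    (hw' : WinAt α f ρ' c') (hd0 : c < c') (hd : c' - c ≤ 2^j + 1) : False := by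
  have hP : (0:ℕ) < 2^j := Nat.pow_pos (by norm_num)
  have hρ : 0 < ρ := lt_of_lt_of_le hP hb1
  have hρ' : 0 < ρ' := lt_of_lt_of_le hP hb1'
  have h2j : (2:ℕ)^(j+1) = 2 * 2^j := by ring
  have hpow_eq : (((2:ℕ)^j : ℕ) : ℤ) = (2:ℤ)^j := by push_cast; ring
  have hlamρ : 4 * ρ ≤ lamLen α ρ := lam_ge hα ρ
  have hlamρ' : 4 * ρ' ≤ lamLen α ρ' := lam_ge hα ρ'
  set oa : ℤ := max (c + 1 - (lamLen α ρ : ℤ)) (c' + 1 - (lamLen α ρ' : ℤ)) with hoa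
  have hOρ : PerOn f oa c ρ := hw.mono (le_max_left _ _) le_rfl
  have hOρ' : PerOn f oa c ρ' := hw'.mono (le_max_right _ _) (by omega)
  have hcast : ((2:ℕ)^j : ℤ) ≤ ρ ∧ ((2:ℕ)^j : ℤ) ≤ ρ' ∧ (ρ:ℤ) < 2 * 2^j ∧ (ρ':ℤ) < 2*2^j := by
    refine ⟨by exact_mod_cast hb1, by exact_mod_cast hb1', ?_, ?_⟩
    · rw [h2j] at hb2; exact_mod_cast hb2
    · rw [h2j] at hb2'; exact_mod_cast hb2'
  have hlen : (ρ:ℤ) + ρ' ≤ c - oa + 1 := by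
    have h1 : (4 * ρ : ℤ) ≤ (lamLen α ρ : ℤ) := by exact_mod_cast hlamρ
    have h2 : (4 * ρ' : ℤ) ≤ (lamLen α ρ' : ℤ) := by exact_mod_cast hlamρ'
    have h3 : ((2:ℕ)^j : ℤ) > 0 := by positivity
    omega
  have hg := fine_wilf hρ hρ' hlen hOρ hOρ'
  set g := Nat.gcd ρ ρ' with hgdef
  have hgρ : g ∣ ρ := Nat.gcd_dvd_left _ _
  have hgρ' : g ∣ ρ' := Nat.gcd_dvd_right _ _
  have hgpos : 0 < g := Nat.gcd_pos_of_pos_left _ hρ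
  by_cases hcase : g = ρ
  · -- ρ ∣ ρ' : propagate period ρ into the window at c' and contradict ¬ExtAt
    have hρρ' : ρ ∣ ρ' := hcase ▸ hgρ'
    have hprop : PerOn f (c' + 1 - (lamLen α ρ' : ℤ)) c' ρ := by
      apply per_propagate hw' (hcase ▸ hg) (le_max_right _ _) (by omega) hρρ'
        ?_ hρ hρ'
      have h2 : (4 * ρ' : ℤ) ≤ (lamLen α ρ' : ℤ) := by exact_mod_cast hlamρ'
      omega
    apply he
    have := hprop (c + 1 - ρ) ?_ ?_
    · unfold ExtAt
      rw [this]
      congr 1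
      omega
    · have h2 : (4 * ρ' : ℤ) ≤ (lamLen α ρ' : ℤ) := by exact_mod_cast hlamρ'
      have h3 : ((2:ℕ)^j : ℤ) > 0 := by positivity
      omega
    · omega
  · have hgρlt : g < ρ := lt_of_le_of_ne (Nat.le_of_dvd hρ hgρ) hcase
    by_cases hcase2 : g = ρ'
    · -- ρ' ∣ ρ, ρ' < ρ : window at c gets period ρ', contradict NoWin
      have hρ'ρ : ρ' ∣ ρ := hcase2 ▸ hgρ
      have hρ2ρ' : 2 * ρ' ≤ ρ := by
        rcases hρ'ρ with ⟨k, hk⟩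
        have : 2 ≤ k := by
          rcases Nat.lt_or_ge k 2 with h | h
          · interval_cases k <;> omega
          · exact h
        nlinarith
      have hprop : PerOn f (c + 1 - (lamLen α ρ : ℤ)) c ρ' := by
        apply per_propagate hw (hcase2 ▸ hg) (le_max_left _ _) le_rfl hρ'ρ ?_ hρ' hρ
        omega
      have hLle : LLen α ρ' ≤ lamLen α ρ := LLen_le_lam hα hρ' hρ2ρ'
      apply hnw (c + 1 - (lamLen α ρ : ℤ)) ρ' hρ'
      apply hprop.mono le_rfl
      have : ((LLen α ρ' : ℕ) : ℤ) ≤ (lamLen α ρ : ℤ) := by exact_mod_cast hLle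
      omega
    · -- g < ρ and g < ρ' : window at c' gets period g, contradict NoWin
      have hgρ'lt : g < ρ' := lt_of_le_of_ne (Nat.le_of_dvd hρ' hgρ') hcase2
      have hρ'2g : 2 * g ≤ ρ' := by
        rcases hgρ' with ⟨k, hk⟩
        have : 2 ≤ k := by
          rcases Nat.lt_or_ge k 2 with h | h
          · interval_cases k <;> omega
          · exact h
        nlinarith
      have hprop : PerOn f (c' + 1 - (lamLen α ρ' : ℤ)) c' g := by
        apply per_propagate hw' hg (le_max_right _ _) (by omega) hgρ' ?_ hgpos hρ'
        have : (g : ℤ) ≤ ρ := by exact_mod_cast hgρlt.le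
        omega
      have hLle : LLen α g ≤ lamLen α ρ' := LLen_le_lam hα hgpos hρ'2g
      apply hnw (c' + 1 - (lamLen α ρ' : ℤ)) g hgpos
      apply hprop.mono le_rfl
      have : ((LLen α g : ℕ) : ℤ) ≤ (lamLen α ρ' : ℤ) := by exact_mod_cast hLle
      omega

lemma geom_half_sum (n : ℕ) :
    (Finset.range n).sum (fun j => ((1:ℚ)/2)^j) = 2 - 2 * (1/2)^n := by
  induction n with
  | zero => simp
  | succ n ih =>
    rw [Finset.sum_range_succ, ih, pow_succ]
    ring

lemma geom_half_sum_le (n : ℕ) : (Finset.range n).sum (fun j => ((1:ℚ)/2)^j) ≤ 2 := by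
  rw [geom_half_sum]
  have : (0:ℚ) ≤ (1/2)^n := by positivity
  linarith

/-- the sum `Σ_{j<n} 1/(2^j+2)` is at most `697/720 < 1`. -/
lemma band_sum_le (n : ℕ) :
    (Finset.range n).sum (fun j => (1:ℚ) / (2^j + 2)) ≤ 697/720 := by
  have hterm_nonneg : ∀ j : ℕ, (0:ℚ) ≤ 1 / (2^j + 2) := by
    intro j; positivity
  have h5 : (Finset.range 5).sum (fun j => (1:ℚ) / (2^j + 2)) = 163/180 := by
    norm_num [Finset.sum_range_succ]
  by_cases hn : n ≤ 5
  · calc (Finset.range n).sum (fun j => (1:ℚ) / (2^j + 2))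
        ≤ (Finset.range 5).sum (fun j => (1:ℚ) / (2^j + 2)) := by
          apply Finset.sum_le_sum_of_subset_of_nonneg
          · exact Finset.range_subset_range.mpr hn
          · intro j _ _; exact hterm_nonneg j
      _ = 163/180 := h5
      _ ≤ 697/720 := by norm_num
  · push_neg at hn
    have hsplit : (Finset.range n).sum (fun j => (1:ℚ) / (2^j + 2)) =
        (Finset.range 5).sum (fun j => (1:ℚ) / (2^j + 2)) +
        (Finset.Ico 5 n).sum (fun j => (1:ℚ) / (2^j + 2)) := by
      simp only [Finset.range_eq_Ico]
      exact (Finset.sum_Ico_consecutive _ (by omega) (by omega)).symm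
    have htail : (Finset.Ico 5 n).sum (fun j => (1:ℚ) / (2^j + 2)) ≤ 1/16 := by
      have hle : (Finset.Ico 5 n).sum (fun j => (1:ℚ) / (2^j + 2)) ≤
          (Finset.Ico 5 n).sum (fun j => ((1:ℚ)/2)^j) := by
        apply Finset.sum_le_sum
        intro j _
        rw [div_pow, one_pow]
        apply div_le_div_of_nonneg_left (by norm_num) (by positivity)
        have : (0:ℚ) < 2^j := by positivity
        linarith
      have heq : (Finset.Ico 5 n).sum (fun j => ((1:ℚ)/2)^j) =
          ((1:ℚ)/2)^5 * (Finset.range (n - 5)).sum (fun j => ((1:ℚ)/2)^j) := by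
        rw [Finset.sum_Ico_eq_sum_range]
        rw [Finset.mul_sum]
        apply Finset.sum_congr rfl
        intro j _
        rw [← pow_add]
      have := geom_half_sum_le (n - 5)
      calc (Finset.Ico 5 n).sum (fun j => (1:ℚ) / (2^j + 2))
          ≤ (Finset.Ico 5 n).sum (fun j => ((1:ℚ)/2)^j) := hle
        _ = ((1:ℚ)/2)^5 * (Finset.range (n - 5)).sum (fun j => ((1:ℚ)/2)^j) := heq
        _ ≤ ((1:ℚ)/2)^5 * 2 := by
            apply mul_le_mul_of_nonneg_left this (by positivity)
        _ = 1/16 := by norm_num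
    rw [hsplit, h5]
    linarith

/-- Existence of a good cut position. -/
theorem good_cut {α : ℚ} {f : ℤ → A} (hα : 5 ≤ α) (hnw : NoWin α f)
    (N : ℤ) (B m : ℕ) (hB : 1 ≤ B)
    (hm : 720 * (Nat.log 2 B + 2) ≤ m) :
    ∃ c : ℤ, N ≤ c ∧ c < N + m ∧
      ∀ ρ : ℕ, 1 ≤ ρ → ρ ≤ B → WinAt α f ρ c → ExtAt f ρ c := by
  by_contra hcon
  push_neg at hcon
  classical
  set I : Finset ℤ := Finset.Ico N (N + m) with hI
  have hIcard : I.card = m := by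
    rw [hI, Int.card_Ico]
    omega
  have hsel : ∀ c ∈ I, ∃ ρ : ℕ, (1 ≤ ρ ∧ ρ ≤ B) ∧ WinAt α f ρ c ∧ ¬ ExtAt f ρ c := by
    intro c hc
    rw [hI, Finset.mem_Ico] at hc
    obtain ⟨ρ, h1, h2, h3, h4⟩ := hcon c hc.1 hc.2
    exact ⟨ρ, ⟨h1, h2⟩, h3, h4⟩
  choose! σ hσr hσw hσe using hsel
  set J := Nat.log 2 B with hJ
  have hband : ∀ c ∈ I, Nat.log 2 (σ c) ∈ Finset.range (J + 1) := by
    intro c hc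
    rw [Finset.mem_range]
    have := Nat.log_mono_right (b := 2) (hσr c hc).2
    omega
  have hsplit := Finset.card_eq_sum_card_fiberwise hband
  have hfiber : ∀ j ∈ Finset.range (J + 1),
      (I.filter (fun c => Nat.log 2 (σ c) = j)).card ≤ m / (2^j + 2) + 1 := by
    intro j hj
    apply card_spaced _ N m (2^j + 2) (by positivity)
    · intro c hc
      rw [Finset.mem_filter, hI, Finset.mem_Ico] at hc
      exact ⟨hc.1.1, hc.1.2⟩
    · intro c hc c' hc' hne
      rw [Finset.mem_filter] at hc hc'
      obtain ⟨hcI, hcj⟩ := hc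
      obtain ⟨hc'I, hc'j⟩ := hc'
      by_contra habs
      push_neg at habs
      have hb1 : 2^j ≤ σ c := by
        rw [← hcj]; exact Nat.pow_log_le_self 2 (by have := (hσr c hcI).1; omega)
      have hb2 : σ c < 2^(j+1) := by
        rw [← hcj]; exact Nat.lt_pow_succ_log_self (by norm_num) _
      have hb1' : 2^j ≤ σ c' := by
        rw [← hc'j]; exact Nat.pow_log_le_self 2 (by have := (hσr c' hc'I).1; omega)
      have hb2' : σ c' < 2^(j+1) := by
        rw [← hc'j]; exact Nat.lt_pow_succ_log_self (by norm_num) _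
      have habs' : |c - c'| < ((2^j + 2 : ℕ) : ℤ) := habs
      have hpow_eq : (((2:ℕ)^j : ℕ) : ℤ) = (2:ℤ)^j := by push_cast; ring
      rw [abs_lt] at habs'
      rcases lt_or_gt_of_ne hne with h | h
      · exact kill hα hnw hb1 hb2 hb1' hb2' (hσw c hcI) (hσe c hcI) (hσw c' hc'I) h
          (by push_cast at habs' ⊢; omega)
      · exact kill hα hnw hb1' hb2' hb1 hb2 (hσw c' hc'I) (hσe c' hc'I) (hσw c hcI) h
          (by push_cast at habs' ⊢; omega)
  -- sum up, in ℚ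
  have hsum_nat : m ≤ (Finset.range (J + 1)).sum (fun j => m / (2^j + 2)) + (J + 1) := by
    calc m = I.card := hIcard.symm
      _ = (Finset.range (J+1)).sum
            (fun j => (I.filter (fun c => Nat.log 2 (σ c) = j)).card) := hsplit
      _ ≤ (Finset.range (J+1)).sum (fun j => m / (2^j + 2) + 1) :=
          Finset.sum_le_sum hfiber
      _ = (Finset.range (J+1)).sum (fun j => m / (2^j + 2)) + (J + 1) := by
          rw [Finset.sum_add_distrib]
          simp
  have hq1 : (((Finset.range (J + 1)).sum (fun j => m / (2^j + 2)) : ℕ) : ℚ) ≤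
      (m : ℚ) * (697/720) := by
    rw [Nat.cast_sum]
    calc (Finset.range (J + 1)).sum (fun j => ((m / (2^j + 2) : ℕ) : ℚ))
        ≤ (Finset.range (J + 1)).sum (fun j => (m : ℚ) / ((2^j + 2 : ℕ) : ℚ)) := by
          apply Finset.sum_le_sum
          intro j _
          exact Nat.cast_div_le
      _ = (m:ℚ) * (Finset.range (J + 1)).sum (fun j => (1:ℚ) / (2^j + 2)) := by
          rw [Finset.mul_sum]
          apply Finset.sum_congr rfl
          intro j _
          push_cast
          ring
      _ ≤ (m:ℚ) * (697/720) :=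
          mul_le_mul_of_nonneg_left (band_sum_le _) (by positivity)
  have h1 : (m : ℚ) ≤ (((Finset.range (J+1)).sum (fun j => m / (2^j+2)) : ℕ) : ℚ) +
      ((J + 1 : ℕ) : ℚ) := by
    exact_mod_cast hsum_nat
  have hmq : (720 : ℚ) * ((J : ℚ) + 2) ≤ (m : ℚ) := by exact_mod_cast hm
  have hJc : ((J + 1 : ℕ) : ℚ) = (J : ℚ) + 1 := by push_cast; ring
  rw [hJc] at h1
  linarith [hq1, h1, hmq]

end GoodCut


section Assembly

variable {A : Type*}

lemma perOn_reflect {f : ℤ → A} {a b : ℤ} {ρ : ℕ}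
    (h : PerOn (fun q => f (-q)) a b ρ) : PerOn f (-b) (-a) ρ := by
  intro q hq hqb
  have h' := h (-(q + ρ)) (by omega) (by omega)
  simp only [neg_neg] at h'
  rw [show (-(q + (ρ:ℤ)) + ρ) = -q by ring] at h'
  simp only [neg_neg] at h'
  exact h'.symm

lemma perOn_reflect' {f : ℤ → A} {a b : ℤ} {ρ : ℕ}
    (h : PerOn f a b ρ) : PerOn (fun q => f (-q)) (-b) (-a) ρ := by
  intro q hq hqb
  have h' := h (-(q + ρ)) (by omega) (by omega)
  rw [show (-(q + (ρ:ℤ)) + ρ) = -q by ring] at h'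
  exact h'.symm

lemma noWin_reflect {α : ℚ} {f : ℤ → A} (h : NoWin α f) :
    NoWin α (fun q => f (-q)) := by
  intro i ρ hρ hper
  apply h (-(i + ((LLen α ρ : ℤ) - 1))) ρ hρ
  have h2 := perOn_reflect hper
  have : -(i + ((LLen α ρ : ℤ) - 1)) + ((LLen α ρ : ℤ) - 1) = -i := by ring
  rw [this]
  exact h2

lemma exists_third (k : ℕ) (hk : 3 ≤ k) (u w : Fin k) :
    ∃ x : Fin k, x ≠ u ∧ x ≠ w := by
  by_contra hcon
  push_neg at hcon
  have hsub : (Finset.univ : Finset (Fin k)) ⊆ {u, w} := by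
    intro y _
    rcases eq_or_ne y u with h | h
    · simp [h]
    · simp [hcon y h]
  have h1 := Finset.card_le_card hsub
  have h2 : ({u, w} : Finset (Fin k)).card ≤ 2 := by
    apply le_trans (Finset.card_insert_le _ _)
    simp
  simp only [Finset.card_univ, Fintype.card_fin] at h1
  omega

lemma exists_pair_ne (k : ℕ) (hk : 3 ≤ k) (x : Fin k) :
    ∃ a b : Fin k, a ≠ b ∧ a ≠ x ∧ b ≠ x := by
  have h1 : 1 < (Finset.univ.erase x).card := by
    rw [Finset.card_erase_of_mem (Finset.mem_univ _)]
    simp only [Finset.card_univ, Fintype.card_fin]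
    omega
  obtain ⟨a, ha, b, hb, hab⟩ := Finset.one_lt_card.mp h1
  exact ⟨a, b, hab, Finset.ne_of_mem_erase ha, Finset.ne_of_mem_erase hb⟩

/-- the glued bi-infinite word. -/
def glue {k : ℕ} (v : ℤ → Fin k) (c1 c2 : ℤ) (x : Fin k) (fL fR : ℕ → Fin k) :
    ℤ → Fin k :=
  fun q =>
    if q < c1 - 1 then fL (c1 - 2 - q).toNat
    else if q = c1 - 1 then x
    else if q ≤ c2 then v q
    else if q = c2 + 1 then x
    else fR (q - (c2 + 2)).toNat

variable {k : ℕ} {v : ℤ → Fin k} {c1 c2 : ℤ} {x : Fin k} {fL fR : ℕ → Fin k}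

lemma glue_tailL {q : ℤ} (hq : q ≤ c1 - 2) :
    glue v c1 c2 x fL fR q = fL (c1 - 2 - q).toNat := by
  unfold glue
  rw [if_pos (by omega)]

lemma glue_b1 (h12 : c1 ≤ c2 + 1) :
    glue v c1 c2 x fL fR (c1 - 1) = x := by
  unfold glue
  rw [if_neg (by omega), if_pos rfl]

lemma glue_mid {q : ℤ} (h1 : c1 ≤ q) (h2 : q ≤ c2) :
    glue v c1 c2 x fL fR q = v q := by
  unfold glue
  rw [if_neg (by omega), if_neg (by omega), if_pos h2]

lemma glue_b2 (h12 : c1 ≤ c2 + 1) :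
    glue v c1 c2 x fL fR (c2 + 1) = x := by
  unfold glue
  rw [if_neg (by omega), if_neg (by omega), if_neg (by omega), if_pos rfl]

lemma glue_tailR {q : ℤ} (h12 : c1 ≤ c2 + 1) (hq : c2 + 2 ≤ q) :
    glue v c1 c2 x fL fR q = fR (q - (c2 + 2)).toNat := by
  unfold glue
  rw [if_neg (by omega), if_neg (by omega), if_neg (by omega), if_neg (by omega)]

end Assembly


section Main

theorem statement12' (k : ℕ) (hk : 3 ≤ k) (α : ℚ) (hα : 5 ≤ α)
    (v : ℤ → Fin k) (hv : PowFreeZ α v)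
    (w : List (Fin k)) (hw : w ≠ []) (hwv : FactorZ v w) :
    ∃ (v' : ℤ → Fin k) (x : Fin k),
      PowFreeZ α v' ∧ FactorZ v' w ∧ ¬ RecZ v' [x] := by
  classical
  obtain ⟨iw, hocw⟩ := hwv
  set n := w.length with hn
  have hn1 : 0 < n := List.length_pos_iff_ne_nil.mpr hw
  have hnw : NoWin α v := noWin_of_powFreeZ hα hv
  set L1 := LLen α 1 with hL1
  have hL15 : 5 ≤ L1 := by have := LLen_ge hα 1; omega
  set K : ℕ := n + L1 with hK
  set m : ℕ := 720 * (K + 80) with hm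
  set B : ℕ := K + 20 + 2 * m with hB
  have hmB : 720 * (Nat.log 2 B + 2) ≤ m := by
    have h1 : K < 2^K := Nat.lt_two_pow_self
    have h2 : B < 2^(K + 78) := by
      have e1 : B = 1441 * K + 115220 := by rw [hB, hm]; ring
      have e2 : 1441 * K + 115220 < 262144 * (K + 1) := by omega
      have e3 : (262144 : ℕ) * (K + 1) ≤ 262144 * 2^K := by
        apply Nat.mul_le_mul_left
        omega
      have e4 : (262144 : ℕ) * 2^K = 2^(K + 18) := by
        rw [pow_add]
        ring
      have e5 : (2:ℕ)^(K + 18) ≤ 2^(K + 78) := Nat.pow_le_pow_right (by norm_num) (by omega)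
      rw [e1]; exact lt_of_lt_of_le e2 (e3.trans (e4.le.trans e5))
    have h3 : Nat.log 2 B ≤ K + 78 := by
      calc Nat.log 2 B ≤ Nat.log 2 (2^(K + 78)) := Nat.log_mono_right h2.le
        _ = K + 78 := by rw [Nat.log_pow (by norm_num : 1 < 2)]
    omega
  -- right cut
  obtain ⟨c2, hc2l, hc2r, hRgood⟩ := good_cut hα hnw (iw + n) B m (by omega) hmB
  -- left cut via reflection
  have hnwR : NoWin α (fun q => v (-q)) := noWin_reflect hnw
  obtain ⟨ct, hctl, hctr, hLgood0⟩ :=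
    good_cut hα hnwR ((L1 : ℤ) + 5 - iw) B m (by omega) hmB
  set c1 : ℤ := -ct with hc1def
  have hc1l : c1 ≤ iw - (L1 : ℤ) - 5 := by omega
  have hc1r : iw - (L1 : ℤ) - 5 - m < c1 := by omega
  have hgeo1 : c1 + ((n : ℤ) + L1 + 5) ≤ c2 := by omega
  have hgeo2 : c2 - c1 + 1 ≤ (B : ℤ) := by
    have : ((K + 20 + 2 * m : ℕ) : ℤ) = (K : ℤ) + 20 + 2 * m := by push_cast; ring
    omega
  have hc12 : c1 ≤ c2 + 1 := by omega
  -- translated left goodness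
  have hLgood : ∀ ρ : ℕ, 1 ≤ ρ → ρ ≤ B →
      PerOn v c1 (c1 + ((lamLen α ρ : ℤ) - 1)) ρ → v (c1 - 1 + ρ) = v (c1 - 1) := by
    intro ρ h1 h2 hwin
    have hwR : WinAt α (fun q => v (-q)) ρ ct := by
      unfold WinAt
      have h3 := perOn_reflect' hwin
      have e1 : -(c1 + ((lamLen α ρ : ℤ) - 1)) = ct + 1 - (lamLen α ρ : ℤ) := by omega
      have e2 : -c1 = ct := by omega
      rw [e1, e2] at h3
      exact h3
    have hext := hLgood0 ρ h1 h2 hwR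
    unfold ExtAt at hext
    simp only at hext
    have e1 : -(ct + 1 - (ρ:ℤ)) = c1 - 1 + ρ := by omega
    have e2 : -(ct + 1) = c1 - 1 := by omega
    rw [e1, e2] at hext
    exact hext
  -- letter choices
  obtain ⟨x, hx1, hx2⟩ := exists_third k hk (v (c2 + 1)) (v (c1 - 1))
  obtain ⟨a, b, hab, hax, hbx⟩ := exists_pair_ne k hk x
  set enc : Bool → Fin k := fun bo => if bo then b else a with henc
  have henc_ne : ∀ bo, enc bo ≠ x := by
    intro bo
    cases bo <;> simp [henc, hax, hbx]
  have henc_inj : ∀ bo1 bo2, enc bo1 = enc bo2 → bo1 = bo2 := by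
    intro bo1 bo2 h
    cases bo1 <;> cases bo2
    · rfl
    · exfalso; simp [henc] at h; first | exact hab h | exact hab h.symm
    · exfalso; simp [henc] at h; first | exact hab h | exact hab h.symm
    · rfl
  -- the danger set and the forced boundary letters
  set D : Set ℕ := {ρ | 2 ≤ ρ ∧ (3 * ρ : ℤ) ≤ c2 - c1 + 1 ∧ PerOn v c1 c2 ρ} with hD
  set γL : Fin k := if hDne : D.Nonempty then v (c1 - 2 + sInf D) else x with hγL
  set γR : Fin k := if hDne : D.Nonempty then v (c2 + 2 - sInf D) else x with hγR
  have hγ : ∀ ρ ∈ D, v (c1 - 2 + ρ) = γL ∧ v (c2 + 2 - ρ) = γR := by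
    intro ρ hρD
    have hDne : D.Nonempty := ⟨ρ, hρD⟩
    obtain ⟨hρ2, hρ3, hρper⟩ := hρD
    have hρ₀D := Nat.sInf_mem hDne
    obtain ⟨hρ₀2, hρ₀3, hρ₀per⟩ := hρ₀D
    set ρ₀ := sInf D
    rw [hγL, hγR, dif_pos hDne, dif_pos hDne]
    set g := Nat.gcd ρ ρ₀ with hg
    have hgpos : 0 < g := Nat.gcd_pos_of_pos_left _ (by omega)
    have hfw : PerOn v c1 c2 g := by
      apply fine_wilf (by omega) (by omega) ?_ hρper hρ₀per
      omega
    have hdvd1 : (g : ℤ) ∣ ((ρ:ℤ) - ρ₀) := by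
      apply dvd_sub
      · exact_mod_cast Int.natCast_dvd_natCast.mpr (Nat.gcd_dvd_left _ _)
      · exact_mod_cast Int.natCast_dvd_natCast.mpr (Nat.gcd_dvd_right _ _)
    constructor
    · apply hfw.residue hgpos (by omega) (by omega) (by omega) (by omega)
      rw [show c1 - 2 + (ρ₀:ℤ) - (c1 - 2 + ρ) = -((ρ:ℤ) - ρ₀) from by ring]
      exact hdvd1.neg_right
    · apply hfw.residue hgpos (by omega) (by omega) (by omega) (by omega)
      rw [show c2 + 2 - (ρ₀:ℤ) - (c2 + 2 - ρ) = (ρ:ℤ) - ρ₀ from by ring]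
      exact hdvd1
  -- tail alignments
  set σL : ℕ := if γL = b then 0 else 1 with hσL
  set σR : ℕ := if γR = b then 0 else 1 with hσR
  have hτL : enc (tmW σL) ≠ γL := by
    by_cases hc : γL = b
    · rw [hσL, if_pos hc, tmW_zero, hc]
      simp [henc, hab]
    · rw [hσL, if_neg hc, tmW_one]
      simp [henc]
      exact fun h => hc h.symm
  have hτR : enc (tmW σR) ≠ γR := by
    by_cases hc : γR = b
    · rw [hσR, if_pos hc, tmW_zero, hc]
      simp [henc, hab]
    · rw [hσR, if_neg hc, tmW_one]
      simp [henc]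
      exact fun h => hc h.symm
  set fL : ℕ → Fin k := fun s => enc (tmW (σL + s)) with hfL
  set fR : ℕ → Fin k := fun s => enc (tmW (σR + s)) with hfR
  set v' : ℤ → Fin k := glue v c1 c2 x fL fR with hv'
  have ev_tailL : ∀ q : ℤ, q ≤ c1 - 2 → v' q = fL (c1 - 2 - q).toNat := by
    intro q hq; rw [hv']; exact glue_tailL hq
  have ev_b1 : v' (c1 - 1) = x := by rw [hv']; exact glue_b1 hc12
  have ev_mid : ∀ q : ℤ, c1 ≤ q → q ≤ c2 → v' q = v q := by
    intro q h1 h2; rw [hv']; exact glue_mid h1 h2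
  have ev_b2 : v' (c2 + 1) = x := by rw [hv']; exact glue_b2 hc12
  have ev_tailR : ∀ q : ℤ, c2 + 2 ≤ q → v' q = fR (q - (c2 + 2)).toNat := by
    intro q hq; rw [hv']; exact glue_tailR hc12 hq
  have ev_tail_ne : ∀ q : ℤ, (q ≤ c1 - 2 ∨ c2 + 2 ≤ q) → v' q ≠ x := by
    intro q hq
    rcases hq with h | h
    · rw [ev_tailL q h]; rw [hfL]; exact henc_ne _
    · rw [ev_tailR q h]; rw [hfR]; exact henc_ne _
  -- main power-freeness
  have hnoz : NoWin α v' := by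
    intro i ρ hρ hper
    set Lw := LLen α ρ with hLw
    set lam := lamLen α ρ with hlam
    set i1 : ℤ := i + ((Lw : ℤ) - 1) with hi1
    have hlam4 : 4 * ρ ≤ lam := lam_ge hα ρ
    have hlamLw : lam + ρ = Lw := lam_add hα ρ
    have hLw5 : 5 * ρ ≤ Lw := LLen_ge hα ρ
    have hlam4' : (4 * ρ : ℤ) ≤ (lam : ℤ) := by exact_mod_cast hlam4
    have hlamLw' : (lam : ℤ) + ρ = (Lw : ℤ) := by exact_mod_cast hlamLw
    have hLw5' : (5 * ρ : ℤ) ≤ (Lw : ℤ) := by exact_mod_cast hLw5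
    have hρ' : (1 : ℤ) ≤ (ρ : ℤ) := by exact_mod_cast hρ
    by_cases hA : i1 < c1 - 1
    · -- window inside the left tail
      apply tm4 ρ hρ (σL + (c1 - 2 - i1).toNat)
      intro s hs
      have hs' : (s : ℤ) < 3 * ρ := by exact_mod_cast hs
      have hq := hper (i1 - (ρ:ℤ) - s) (by omega) (by omega)
      rw [ev_tailL _ (by omega), ev_tailL _ (by omega)] at hq
      have e1 : (c1 - 2 - (i1 - (ρ:ℤ) - s)).toNat = (c1 - 2 - i1).toNat + s + ρ := by omega
      have e2 : (c1 - 2 - (i1 - (ρ:ℤ) - s + ρ)).toNat = (c1 - 2 - i1).toNat + s := by omega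
      rw [e1, e2] at hq
      rw [hfL] at hq
      simp only at hq
      have h3 := henc_inj _ _ hq
      have e3 : σL + ((c1 - 2 - i1).toNat + s) = σL + (c1 - 2 - i1).toNat + s := by omega
      have e4 : σL + ((c1 - 2 - i1).toNat + s + ρ) = σL + (c1 - 2 - i1).toNat + s + ρ := by
        omega
      rw [e3, e4] at h3
      exact h3.symm
    · by_cases hB2 : c2 + 2 ≤ i
      · -- window inside the right tail
        apply tm4 ρ hρ (σR + (i - (c2 + 2)).toNat)
        intro s hs
        have hs' : (s : ℤ) < 3 * ρ := by exact_mod_cast hs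
        have hq := hper (i + (s:ℤ)) (by omega) (by omega)
        rw [ev_tailR _ (by omega), ev_tailR _ (by omega)] at hq
        have e1 : (i + (s:ℤ) - (c2 + 2)).toNat = (i - (c2 + 2)).toNat + s := by omega
        have e2 : (i + (s:ℤ) + ρ - (c2 + 2)).toNat = (i - (c2 + 2)).toNat + s + ρ := by omega
        rw [e1, e2] at hq
        rw [hfR] at hq
        simp only at hq
        have h3 := henc_inj _ _ hq
        have e3 : σR + ((i - (c2 + 2)).toNat + s) = σR + (i - (c2 + 2)).toNat + s := by omega
        have e4 : σR + ((i - (c2 + 2)).toNat + s + ρ) = σR + (i - (c2 + 2)).toNat + s + ρ := by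
          omega
        rw [e3, e4] at h3
        exact h3
      · push_neg at hB2
        by_cases hC2 : i ≤ c2 + 1 ∧ c2 + 1 ≤ i1
        · -- window contains the right barrier
          obtain ⟨hC2a, hC2b⟩ := hC2
          -- step 0: cannot extend ρ beyond the barrier
          have hstep0 : i1 ≤ c2 + 1 + (ρ:ℤ) - 1 := by
            by_contra hcon
            push_neg at hcon
            have hq := hper (c2 + 1) hC2a (by omega)
            rw [ev_b2, ev_tailR _ (by omega)] at hq
            exact henc_ne _ hq.symm
          have hstep1 : i ≤ c2 + 1 - (lam : ℤ) := by omega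
          -- slot
          have hslot0 : v' (c2 + 1 - (ρ:ℤ)) = x := by
            have hq := hper (c2 + 1 - (ρ:ℤ)) (by omega) (by omega)
            rw [hq, show c2 + 1 - (ρ:ℤ) + ρ = c2 + 1 from by ring, ev_b2]
          -- the slot position must be in M
          have hρM : (ρ : ℤ) ≤ c2 + 1 - c1 := by
            rcases lt_trichotomy ((ρ:ℤ)) (c2 + 2 - c1) with h | h | h
            · omega
            · -- slot lands exactly on the left barrier; one more period lands in the tail
              exfalso
              have hq := hper (c2 + 1 - 2*(ρ:ℤ)) (by omega) (by omega)
              rw [show c2 + 1 - 2*(ρ:ℤ) + ρ = c2 + 1 - ρ from by ring, hslot0] at hq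
              exact ev_tail_ne _ (by omega) hq
            · exfalso
              exact ev_tail_ne (c2 + 1 - (ρ:ℤ)) (by omega) hslot0
          have hslot : v (c2 + 1 - (ρ:ℤ)) = x := by
            rw [← ev_mid _ (by omega) (by omega)]
            exact hslot0
          by_cases hlamM : (lam : ℤ) ≤ c2 - c1 + 1
          · -- C2a : genuine right window, contradicts the good cut at c2
            have hwin : WinAt α v ρ c2 := by
              unfold WinAt
              intro q hq hqb
              rw [← ev_mid q (by omega) (by omega), ← ev_mid (q + ρ) (by omega) (by omega)]
              exact hper q (by omega) (by omega)
            have hρB : ρ ≤ B := by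
              have h1 : (ρ:ℤ) ≤ (B:ℤ) := by omega
              exact_mod_cast h1
            have hext := hRgood ρ hρ hρB hwin
            unfold ExtAt at hext
            rw [hslot] at hext
            exact hx1 hext
          · push_neg at hlamM
            have hib1 : i ≤ c1 - 1 := by omega
            by_cases h3ρ : c2 - c1 + 2 ≤ 3 * (ρ:ℤ)
            · -- C2b : an x copies into the left tail
              have hq := hper (c1 - 1 - (ρ:ℤ)) (by omega) (by omega)
              rw [show c1 - 1 - (ρ:ℤ) + ρ = c1 - 1 from by ring, ev_b1] at hq
              exact ev_tail_ne _ (by omega) hq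
            · -- C2c : danger band
              push_neg at h3ρ
              have hρ2 : 2 ≤ ρ := by
                by_contra hcon
                push_neg at hcon
                have hρ1 : ρ = 1 := by omega
                have hlam1 : lam = L1 - 1 := by
                  rw [hlam, hρ1, hL1]
                  unfold lamLen
                  rfl
                have : (lam : ℤ) = (L1 : ℤ) - 1 := by
                  rw [hlam1]
                  omega
                omega
              have hMper : PerOn v c1 c2 ρ := by
                intro q hq hqb
                rw [← ev_mid q (by omega) (by omega), ← ev_mid (q+ρ) (by omega) (by omega)]
                exact hper q (by omega) (by omega)
              have hρD : ρ ∈ D := ⟨hρ2, by omega, hMper⟩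
              obtain ⟨hγ1, hγ2⟩ := hγ ρ hρD
              rcases lt_or_eq_of_le hib1 with hlt | heqi
              · -- i ≤ c1 - 2 : left-tail last letter forced to be γL
                have hq := hper (c1 - 2) (by omega) (by omega)
                rw [ev_tailL _ le_rfl] at hq
                rw [show c1 - 2 + (ρ:ℤ) = c1 - 2 + (ρ:ℤ) from rfl] at hq
                rw [ev_mid (c1 - 2 + (ρ:ℤ)) (by omega) (by omega)] at hq
                rw [show (c1 - 2 - (c1 - 2)).toNat = 0 from by omega] at hq
                rw [hfL] at hq
                simp only [Nat.add_zero] at hq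
                rw [hγ1] at hq
                exact hτL hq
              · -- i = c1 - 1 : right-tail first letter forced to be γR
                have hstep : i1 = c2 + (ρ:ℤ) := by omega
                have hq := hper (c2 + 2 - (ρ:ℤ)) (by omega) (by omega)
                rw [show c2 + 2 - (ρ:ℤ) + ρ = c2 + 2 from by ring] at hq
                rw [ev_mid _ (by omega) (by omega), ev_tailR _ le_rfl] at hq
                rw [show (c2 + 2 - (c2 + 2)).toNat = 0 from by omega] at hq
                rw [hfR] at hq
                simp only [Nat.add_zero] at hq
                rw [hγ2] at hq
                exact hτR hq.symm
        · -- window does not contain the right barrier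
          by_cases hC3 : i ≤ c1 - 1 ∧ c1 - 1 ≤ i1
          · obtain ⟨hC3a, hC3b⟩ := hC3
            have hi1c2 : i1 ≤ c2 := by
              rcases (not_and_or.mp hC2) with h | h
              · omega
              · omega
            have hstep0 : c1 - 1 - (ρ:ℤ) < i := by
              by_contra hcon
              push_neg at hcon
              have hq := hper (c1 - 1 - (ρ:ℤ)) (by omega) (by omega)
              rw [show c1 - 1 - (ρ:ℤ) + ρ = c1 - 1 from by ring, ev_b1] at hq
              exact ev_tail_ne _ (by omega) hq
            have hi1lam : c1 - 1 + (lam:ℤ) ≤ i1 := by omega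
            have hlamM : (lam:ℤ) ≤ c2 - c1 + 1 := by omega
            have hslot : v (c1 - 1 + (ρ:ℤ)) = x := by
              have hq := hper (c1 - 1) (by omega) (by omega)
              rw [ev_b1, ev_mid (c1 - 1 + (ρ:ℤ)) (by omega) (by omega)] at hq
              exact hq.symm
            have hwin : PerOn v c1 (c1 + ((lam:ℤ) - 1)) ρ := by
              intro q hq hqb
              rw [← ev_mid q (by omega) (by omega), ← ev_mid (q+ρ) (by omega) (by omega)]
              exact hper q (by omega) (by omega)
            have hρB : ρ ≤ B := by
              have h1 : (ρ:ℤ) ≤ (B:ℤ) := by omega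
              exact_mod_cast h1
            have hext := hLgood ρ hρ hρB hwin
            rw [hslot] at hext
            exact hx2 hext
          · -- C1 : window inside M, contradicting power-freeness of v
            have hiC1 : c1 ≤ i := by
              rcases (not_and_or.mp hC3) with h | h
              · omega
              · omega
            have hi1C1 : i1 ≤ c2 := by
              rcases (not_and_or.mp hC2) with h | h
              · omega
              · omega
            apply hnw i ρ hρ
            intro q hq hqb
            rw [← ev_mid q (by omega) (by omega), ← ev_mid (q+ρ) (by omega) (by omega)]
            exact hper q (by omega) (by omega)
  refine ⟨v', x, powFreeZ_of_noWin hα hnoz, ⟨iw, ?_⟩, ?_⟩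
  · -- w occurs in v' at iw
    rw [occursZ_iff]
    rw [occursZ_iff] at hocw
    conv_lhs => rw [hocw]
    apply List.ext_getElem (by simp)
    intro j h1 h2
    simp only [List.getElem_map, List.getElem_range]
    have hj : (j : ℤ) < (n : ℤ) := by
      have : j < n := by simpa using h1
      exact_mod_cast this
    rw [ev_mid (iw + (j:ℤ)) (by omega) (by omega)]
  · -- x is not recurrent in v'
    intro hinf
    have hsub : {q : ℤ | OccursZ v' [x] q} ⊆ Set.Icc (c1 - 1) (c2 + 1) := by
      intro q hq
      simp only [Set.mem_setOf_eq] at hq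
      have hval := occursZ_getElem hq 0 (by simp)
      simp only [List.getElem_singleton] at hval
      rw [show q + ((0:ℕ):ℤ) = q from by omega] at hval
      simp only [Set.mem_Icc]
      by_contra hmem
      rw [not_and_or] at hmem
      push_neg at hmem
      apply ev_tail_ne q ?_ hval.symm
      rcases hmem with h | h
      · left; omega
      · right; omega
    exact hinf ((Set.finite_Icc _ _).subset hsub)

end Main



/-- Main Theorem: if `v` is a bi-infinite `α`-power-free word over
`Σ_k` and `w` a nonempty finite factor of `v`, then there are a bi-infinite
`α`-power-free word `v̄` and a letter `x` such that `w` is a factor of `v̄` and `x`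
has only finitely many occurrences in `v̄`. -/
theorem statement12 (k : ℕ) (hk : 3 ≤ k) (α : ℚ) (hα : 5 ≤ α)
    (v : ℤ → Fin k) (hv : PowFreeZ α v)
    (w : List (Fin k)) (hw : w ≠ []) (hwv : FactorZ v w) :
    ∃ (v' : ℤ → Fin k) (x : Fin k),
      PowFreeZ α v' ∧ FactorZ v' w ∧ ¬ RecZ v' [x] :=
  statement12' k hk α hα v hv w hw hwv

end PowerFreeFormalization
end
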